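/- arXiv:2406.19696 — 6 statements merged into one kernel-verified Lean document; each statement's English description precedes it below -/
import Mathlib

section
/- For every L > 0 and every φ_0 ∈ ℝ, there exists exactly one twice continuously differentiable function φ : [−L/2, L/2] → ℝ satisfying φ″(x) + f(φ(x)) = 0 on [−L/2, L/2] together with the equal Dirichlet boundary conditions φ(−L/2) = φ(L/2) = φ_0. -/
open Real Filter Set Topology intervalIntegral

/-- A (C²) solution of the PB equation `φ'' + f(φ) = 0` on `[a, b]`, written as the
first-order planar system `φ' = u`, `u' = -f(φ)` (so `φ` is twice continuously
differentiable on `[a, b]` with second derivative `-f ∘ φ`). -/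
def IsPBSol (f : ℝ → ℝ) (a b : ℝ) (φ u : ℝ → ℝ) : Prop :=
  ∀ x ∈ Set.Icc a b,
    HasDerivWithinAt φ (u x) (Set.Icc a b) x ∧
    HasDerivWithinAt u (-(f (φ x))) (Set.Icc a b) x

lemma pb_not_min {a b : ℝ} {v v' v'' : ℝ → ℝ} {x0 : ℝ} (hx0 : x0 ∈ Ioo a b)
    (hv : ∀ x ∈ Ioo a b, HasDerivAt v (v' x) x)
    (hv' : ∀ x ∈ Ioo a b, HasDerivAt v' (v'' x) x)
    (hcont : ContinuousOn v'' (Ioo a b))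
    (hz : v' x0 = 0) (hneg : v'' x0 < 0) :
    ∃ y ∈ Ioo a b, v y < v x0 := by
  have hCA : ContinuousAt v'' x0 :=
    hcont.continuousAt (isOpen_Ioo.mem_nhds hx0)
  have hev : ∀ᶠ y in 𝓝 x0, v'' y < 0 := hCA.eventually_lt_const hneg
  have hev2 : ∀ᶠ y in 𝓝 x0, y ∈ Ioo a b := isOpen_Ioo.mem_nhds hx0
  obtain ⟨δ, hδ, hball⟩ := Metric.eventually_nhds_iff_ball.1 (hev.and hev2)
  set y0 := x0 - δ/2 with hy0
  have hsub : Icc y0 x0 ⊆ Metric.ball x0 δ := by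
    intro t ht
    rw [Metric.mem_ball, Real.dist_eq, abs_lt]
    constructor <;> simp only [hy0] at ht ⊢ <;> [linarith [ht.1]; linarith [ht.2]]
  have hsub' : Icc y0 x0 ⊆ Ioo a b := fun t ht => (hball t (hsub ht)).2
  -- v' is strictly anti on [y0, x0]
  have hanti : StrictAntiOn v' (Icc y0 x0) := by
    apply strictAntiOn_of_deriv_neg (convex_Icc _ _)
    · exact fun t ht => ((hv' t (hsub' ht)).continuousAt).continuousWithinAt
    · intro t ht
      rw [interior_Icc] at ht
      rw [(hv' t (hsub' (Ioo_subset_Icc_self ht))).deriv]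
      exact (hball t (hsub (Ioo_subset_Icc_self ht))).1
  have hy0x0 : y0 < x0 := by simp only [hy0]; linarith
  -- hence v' > 0 on [y0, x0)
  have hpos : ∀ t ∈ Ico y0 x0, 0 < v' t := by
    intro t ht
    have := hanti ⟨ht.1, ht.2.le⟩ (right_mem_Icc.2 hy0x0.le) ht.2
    rwa [hz] at this
  -- v strictly mono on [y0, x0]
  have hmono : StrictMonoOn v (Icc y0 x0) := by
    apply strictMonoOn_of_deriv_pos (convex_Icc _ _)
    · exact fun t ht => ((hv t (hsub' ht)).continuousAt).continuousWithinAt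
    · intro t ht
      rw [interior_Icc] at ht
      rw [(hv t (hsub' (Ioo_subset_Icc_self ht))).deriv]
      exact hpos t ⟨ht.1.le, ht.2⟩
  refine ⟨y0, hsub' (left_mem_Icc.2 hy0x0.le), ?_⟩
  exact hmono (left_mem_Icc.2 hy0x0.le) (right_mem_Icc.2 hy0x0.le) hy0x0

lemma pb_not_max {a b : ℝ} {v v' v'' : ℝ → ℝ} {x0 : ℝ} (hx0 : x0 ∈ Ioo a b)
    (hv : ∀ x ∈ Ioo a b, HasDerivAt v (v' x) x)
    (hv' : ∀ x ∈ Ioo a b, HasDerivAt v' (v'' x) x)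
    (hcont : ContinuousOn v'' (Ioo a b))
    (hz : v' x0 = 0) (hpos : 0 < v'' x0) :
    ∃ y ∈ Ioo a b, v x0 < v y := by
  obtain ⟨y, hy, hlt⟩ := pb_not_min (v := fun x => -v x) (v' := fun x => -v' x)
    (v'' := fun x => -v'' x) hx0
    (fun x hx => (hv x hx).neg) (fun x hx => (hv' x hx).neg)
    (hcont.neg) (by simp [hz]) (by simpa using hpos)
  exact ⟨y, hy, by simpa using hlt⟩

lemma pb_uniq_le {f : ℝ → ℝ} (hfc : Continuous f) (hanti : StrictAnti f)
    {a b : ℝ} (hab : a < b) {φ₁ u₁ φ₂ u₂ : ℝ → ℝ}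
    (h1 : IsPBSol f a b φ₁ u₁) (h2 : IsPBSol f a b φ₂ u₂)
    (hba : φ₁ a = φ₂ a) (hbb : φ₁ b = φ₂ b) :
    ∀ x ∈ Icc a b, φ₁ x ≤ φ₂ x := by
  set v : ℝ → ℝ := fun x => φ₁ x - φ₂ x with hv
  have hcont : ContinuousOn v (Icc a b) := fun x hx =>
    ((h1 x hx).1.continuousWithinAt).sub ((h2 x hx).1.continuousWithinAt)
  obtain ⟨x0, hx0, hmax⟩ := isCompact_Icc.exists_isMaxOn (nonempty_Icc.2 hab.le) hcont
  intro x hx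
  by_contra hlt
  push_neg at hlt
  have hvx : 0 < v x := by simp [hv]; linarith
  have hvx0 : 0 < v x0 := lt_of_lt_of_le hvx (hmax hx)
  have hxa : x0 ≠ a := by
    rintro rfl; simp [hv, hba] at hvx0
  have hxb : x0 ≠ b := by
    rintro rfl; simp [hv, hbb] at hvx0
  have hx0' : x0 ∈ Ioo a b := ⟨lt_of_le_of_ne hx0.1 (Ne.symm hxa), lt_of_le_of_ne hx0.2 hxb⟩
  have hnhds : Icc a b ∈ 𝓝 x0 := Icc_mem_nhds hx0'.1 hx0'.2
  have hv1 : ∀ t ∈ Ioo a b, HasDerivAt v (u₁ t - u₂ t) t := by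
    intro t ht
    have htm : t ∈ Icc a b := Ioo_subset_Icc_self ht
    have hn : Icc a b ∈ 𝓝 t := Icc_mem_nhds ht.1 ht.2
    exact ((h1 t htm).1.hasDerivAt hn).sub ((h2 t htm).1.hasDerivAt hn)
  have hv2 : ∀ t ∈ Ioo a b, HasDerivAt (fun y => u₁ y - u₂ y) (f (φ₂ t) - f (φ₁ t)) t := by
    intro t ht
    have htm : t ∈ Icc a b := Ioo_subset_Icc_self ht
    have hn : Icc a b ∈ 𝓝 t := Icc_mem_nhds ht.1 ht.2
    have := ((h1 t htm).2.hasDerivAt hn).fun_sub ((h2 t htm).2.hasDerivAt hn)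
    simpa [sub_eq_add_neg, add_comm] using this
  have hderiv0 : u₁ x0 - u₂ x0 = 0 := by
    have hlm : IsLocalMax v x0 := hmax.isLocalMax hnhds
    exact hlm.hasDerivAt_eq_zero (hv1 x0 hx0')
  have hcc : ContinuousOn (fun t => f (φ₂ t) - f (φ₁ t)) (Ioo a b) := by
    have c1 : ContinuousOn φ₁ (Ioo a b) := fun t ht =>
      (((h1 t (Ioo_subset_Icc_self ht)).1.hasDerivAt
        (Icc_mem_nhds ht.1 ht.2)).continuousAt).continuousWithinAt
    have c2 : ContinuousOn φ₂ (Ioo a b) := fun t ht =>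
      (((h2 t (Ioo_subset_Icc_self ht)).1.hasDerivAt
        (Icc_mem_nhds ht.1 ht.2)).continuousAt).continuousWithinAt
    exact (hfc.comp_continuousOn c2).sub (hfc.comp_continuousOn c1)
  have hpos2 : 0 < f (φ₂ x0) - f (φ₁ x0) := by
    have : φ₂ x0 < φ₁ x0 := by simp [hv] at hvx0; linarith
    have := hanti this
    linarith
  obtain ⟨y, hy, hgt⟩ := pb_not_max hx0' hv1 hv2 hcc hderiv0 hpos2
  exact absurd (hmax (Ioo_subset_Icc_self hy)) (not_le.2 hgt)


noncomputable def pbF {N : ℕ} (z c : Fin N → ℝ) (q0 : ℝ) : ℝ → ℝ :=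
  fun y => q0 + ∑ j, z j * c j * Real.exp (-(z j) * y)
noncomputable def pbFD {N : ℕ} (z c : Fin N → ℝ) : ℝ → ℝ :=
  fun y => ∑ j, (z j)^2 * c j * Real.exp (-(z j) * y)

lemma pbF_hasDeriv {N : ℕ} (z c : Fin N → ℝ) (q0 : ℝ) (y : ℝ) :
    HasDerivAt (pbF z c q0) (-(pbFD z c y)) y := by
  have h : ∀ j : Fin N, HasDerivAt (fun y => z j * c j * Real.exp (-(z j) * y))
      (-((z j)^2 * c j * Real.exp (-(z j) * y))) y := by
    intro j
    have h1 : HasDerivAt (fun y : ℝ => -(z j) * y) (-(z j)) y := by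
      simpa using (hasDerivAt_id y).const_mul (-(z j))
    have := (h1.exp).const_mul (z j * c j)
    convert! this using 1
    ring
  have hsum : HasDerivAt (fun y => ∑ j, z j * c j * Real.exp (-(z j) * y))
      (∑ j, -((z j)^2 * c j * Real.exp (-(z j) * y))) y :=
    HasDerivAt.fun_sum (fun j _ => h j)
  have := (hasDerivAt_const y q0).add hsum
  convert! this using 1
  simp [pbFD]

lemma pbFD_pos {N : ℕ} {z c : Fin N → ℝ} (hN : 1 ≤ N) (hz : ∀ j, z j ≠ 0)
    (hc : ∀ j, 0 < c j) (y : ℝ) : 0 < pbFD z c y := by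
  have : Nonempty (Fin N) := Fin.pos_iff_nonempty.1 hN
  apply Finset.sum_pos
  · intro j _
    have := hc j
    have hzj := (hz j)
    positivity
  · exact Finset.univ_nonempty

lemma pbF_strictAnti {N : ℕ} {z c : Fin N → ℝ} {q0 : ℝ} (hN : 1 ≤ N)
    (hz : ∀ j, z j ≠ 0) (hc : ∀ j, 0 < c j) : StrictAnti (pbF z c q0) := by
  apply strictAnti_of_deriv_neg
  intro y
  rw [(pbF_hasDeriv z c q0 y).deriv]
  simpa using pbFD_pos hN hz hc y

lemma pbF_cont {N : ℕ} (z c : Fin N → ℝ) (q0 : ℝ) : Continuous (pbF z c q0) :=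
  continuous_iff_continuousAt.2 fun y => (pbF_hasDeriv z c q0 y).continuousAt

-- Lipschitz-type bound for g := -f on an interval [m', M']
lemma pbF_lip {N : ℕ} (z c : Fin N → ℝ) (q0 : ℝ) (hc : ∀ j, 0 < c j) (R K : ℝ)
    (hK : K = ∑ j, (z j)^2 * c j * Real.exp (|z j| * R)) :
    ∀ u v : ℝ, |u| ≤ R → |v| ≤ R →
      |(-(pbF z c q0 u)) - (-(pbF z c q0 v))| ≤ K * |u - v| := by
  intro u v hu hv
  have hR : 0 ≤ R := le_trans (abs_nonneg u) hu
  have hsub : Convex ℝ (Icc (-R) R) := convex_Icc _ _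
  have hbound : ∀ y ∈ Icc (-R) R, ‖pbFD z c y‖ ≤ K := by
    intro y hy
    have hyR : |y| ≤ R := abs_le.2 ⟨hy.1, hy.2⟩
    rw [Real.norm_eq_abs]
    have h1 : pbFD z c y ≤ K := by
      rw [hK, pbFD]
      apply Finset.sum_le_sum
      intro j _
      have hcj := (hc j).le
      have : Real.exp (-(z j) * y) ≤ Real.exp (|z j| * R) := by
        apply Real.exp_le_exp.2
        calc -(z j) * y ≤ |(-(z j)) * y| := le_abs_self _
          _ = |z j| * |y| := by rw [abs_mul, abs_neg]
          _ ≤ |z j| * R := by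
              exact mul_le_mul_of_nonneg_left hyR (abs_nonneg _)
      exact mul_le_mul_of_nonneg_left this (by positivity)
    have h2 : 0 ≤ pbFD z c y := by
      apply Finset.sum_nonneg; intro j _
      have := (hc j).le
      positivity
    rwa [abs_of_nonneg h2]
  have := hsub.norm_image_sub_le_of_norm_hasDerivWithin_le
    (f := fun y => -(pbF z c q0 y)) (f' := fun y => pbFD z c y)
    (fun y _ => by simpa using ((pbF_hasDeriv z c q0 y).fun_neg).hasDerivWithinAt) hbound
    (x := v) (y := u) (abs_le.1 hv |> fun h => ⟨h.1, h.2⟩) (abs_le.1 hu |> fun h => ⟨h.1, h.2⟩)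
  simpa [Real.norm_eq_abs] using this


noncomputable def pbI1 (a s : ℝ) (h : ℝ → ℝ) : ℝ → ℝ :=
  fun x => ∫ y in a..x, Real.sinh (s*(y-a)) * h y
noncomputable def pbI2 (a b s : ℝ) (h : ℝ → ℝ) : ℝ → ℝ :=
  fun x => ∫ y in x..b, Real.sinh (s*(b-y)) * h y
noncomputable def pbGInt (a b s : ℝ) (h : ℝ → ℝ) : ℝ → ℝ := fun x =>
  (Real.sinh (s*(b-x)) * pbI1 a s h x + Real.sinh (s*(x-a)) * pbI2 a b s h x)
    / (s * Real.sinh (s*(b-a)))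
noncomputable def pbB (a b s : ℝ) : ℝ → ℝ :=
  fun x => Real.cosh (s*(x-(a+b)/2)) / Real.cosh (s*(b-a)/2)
noncomputable def pbSol (a b s φ0 : ℝ) (h : ℝ → ℝ) : ℝ → ℝ :=
  fun x => φ0 * pbB a b s x - pbGInt a b s h x
noncomputable def pbSolD (a b s φ0 : ℝ) (h : ℝ → ℝ) : ℝ → ℝ := fun x =>
  φ0 * (s * Real.sinh (s*(x-(a+b)/2)) / Real.cosh (s*(b-a)/2))
  - ((-(s * Real.cosh (s*(b-x)))) * pbI1 a s h x
      + s * Real.cosh (s*(x-a)) * pbI2 a b s h x) / (s * Real.sinh (s*(b-a)))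

lemma cont_v1 (a s : ℝ) : Continuous (fun y => Real.sinh (s*(y-a))) := by fun_prop
lemma cont_v2 (b s : ℝ) : Continuous (fun y => Real.sinh (s*(b-y))) := by fun_prop

lemma pbI1_hasDeriv (a s : ℝ) {h : ℝ → ℝ} (hh : Continuous h) (x : ℝ) :
    HasDerivAt (pbI1 a s h) (Real.sinh (s*(x-a)) * h x) x := by
  have hc : Continuous (fun y => Real.sinh (s*(y-a)) * h y) := (cont_v1 a s).mul hh
  exact intervalIntegral.integral_hasDerivAt_right (hc.intervalIntegrable _ _)
    (hc.aestronglyMeasurable.stronglyMeasurableAtFilter) hc.continuousAt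

lemma pbI2_eq (a b s : ℝ) {h : ℝ → ℝ} (hh : Continuous h) :
    pbI2 a b s h = fun x => (∫ y in a..b, Real.sinh (s*(b-y)) * h y)
      - ∫ y in a..x, Real.sinh (s*(b-y)) * h y := by
  funext x
  have hc : Continuous (fun y => Real.sinh (s*(b-y)) * h y) := (cont_v2 b s).mul hh
  have := intervalIntegral.integral_add_adjacent_intervals (μ := MeasureTheory.volume)
    (hc.intervalIntegrable a x) (hc.intervalIntegrable x b)
  simp only [pbI2]
  linarith

lemma pbI2_hasDeriv (a b s : ℝ) {h : ℝ → ℝ} (hh : Continuous h) (x : ℝ) :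
    HasDerivAt (pbI2 a b s h) (-(Real.sinh (s*(b-x)) * h x)) x := by
  rw [pbI2_eq a b s hh]
  have hc : Continuous (fun y => Real.sinh (s*(b-y)) * h y) := (cont_v2 b s).mul hh
  have h2 : HasDerivAt (fun x => ∫ y in a..x, Real.sinh (s*(b-y)) * h y)
      (Real.sinh (s*(b-x)) * h x) x :=
    intervalIntegral.integral_hasDerivAt_right (hc.intervalIntegrable _ _)
      (hc.aestronglyMeasurable.stronglyMeasurableAtFilter) hc.continuousAt
  simpa using (hasDerivAt_const x _).fun_sub h2

lemma pbSol_hasDeriv (a b s φ0 : ℝ) {h : ℝ → ℝ} (hh : Continuous h) (x : ℝ) :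
    HasDerivAt (pbSol a b s φ0 h) (pbSolD a b s φ0 h x) x := by
  have hinner : HasDerivAt (fun x : ℝ => s*(x-(a+b)/2)) (s*1) x :=
    ((hasDerivAt_id x).sub_const _).const_mul s
  have hB : HasDerivAt (fun x => φ0 * pbB a b s x)
      (φ0 * (Real.sinh (s*(x-(a+b)/2)) * (s*1) / Real.cosh (s*(b-a)/2))) x := by
    exact ((hinner.cosh).div_const _).const_mul φ0
  have hv2 : HasDerivAt (fun x => Real.sinh (s*(b-x)))
      (Real.cosh (s*(b-x)) * (s*(0-1))) x :=
    (((hasDerivAt_const x b).sub (hasDerivAt_id x)).const_mul s).sinh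
  have hv1 : HasDerivAt (fun x => Real.sinh (s*(x-a)))
      (Real.cosh (s*(x-a)) * (s*1)) x :=
    (((hasDerivAt_id x).sub_const a).const_mul s).sinh
  have hG : HasDerivAt (pbGInt a b s h)
      ((Real.cosh (s*(b-x)) * (s*(0-1)) * pbI1 a s h x
        + Real.sinh (s*(b-x)) * (Real.sinh (s*(x-a)) * h x)
        + (Real.cosh (s*(x-a)) * (s*1) * pbI2 a b s h x
        + Real.sinh (s*(x-a)) * (-(Real.sinh (s*(b-x)) * h x))))
        / (s * Real.sinh (s*(b-a)))) x := by
    exact ((hv2.mul (pbI1_hasDeriv a s hh x)).add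
      (hv1.mul (pbI2_hasDeriv a b s hh x))).div_const _
  have := hB.sub hG
  convert! this using 1
  simp only [pbSolD]
  ring

lemma pbSolD_hasDeriv (a b : ℝ) (hab : a < b) {s : ℝ} (hs : 0 < s) (φ0 : ℝ)
    {h : ℝ → ℝ} (hh : Continuous h) (x : ℝ) :
    HasDerivAt (pbSolD a b s φ0 h) (s^2 * pbSol a b s φ0 h x + h x) x := by
  have hsinh : 0 < Real.sinh (s*(b-a)) := Real.sinh_pos_iff.2 (by nlinarith)
  have hW : s * Real.sinh (s*(b-a)) ≠ 0 := by positivity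
  have hC : Real.cosh (s*(b-a)/2) ≠ 0 := (Real.cosh_pos _).ne'
  have key : Real.sinh (s*(b-a)) = Real.sinh (s*(b-x)) * Real.cosh (s*(x-a))
      + Real.cosh (s*(b-x)) * Real.sinh (s*(x-a)) := by
    rw [← Real.sinh_add]; congr 1; ring
  have hinner : HasDerivAt (fun x : ℝ => s*(x-(a+b)/2)) (s*1) x :=
    ((hasDerivAt_id x).sub_const _).const_mul s
  have hB2 : HasDerivAt (fun x => φ0 * (s * Real.sinh (s*(x-(a+b)/2)) / Real.cosh (s*(b-a)/2)))
      (φ0 * (s * (Real.cosh (s*(x-(a+b)/2)) * (s*1)) / Real.cosh (s*(b-a)/2))) x := by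
    exact (((hinner.sinh).const_mul s).div_const _).const_mul φ0
  have hd2 : HasDerivAt (fun x => -(s * Real.cosh (s*(b-x))))
      (-(s * (Real.sinh (s*(b-x)) * (s*(0-1))))) x :=
    (((((hasDerivAt_const x b).sub (hasDerivAt_id x)).const_mul s).cosh).const_mul s).neg
  have hd1 : HasDerivAt (fun x => s * Real.cosh (s*(x-a)))
      (s * (Real.sinh (s*(x-a)) * (s*1))) x :=
    ((((hasDerivAt_id x).sub_const a).const_mul s).cosh).const_mul s
  have hG2 : HasDerivAt (fun x => ((-(s * Real.cosh (s*(b-x)))) * pbI1 a s h x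
      + s * Real.cosh (s*(x-a)) * pbI2 a b s h x) / (s * Real.sinh (s*(b-a))))
      (((-(s * (Real.sinh (s*(b-x)) * (s*(0-1))))) * pbI1 a s h x
        + (-(s * Real.cosh (s*(b-x)))) * (Real.sinh (s*(x-a)) * h x)
        + (s * (Real.sinh (s*(x-a)) * (s*1)) * pbI2 a b s h x
          + s * Real.cosh (s*(x-a)) * (-(Real.sinh (s*(b-x)) * h x))))
        / (s * Real.sinh (s*(b-a)))) x := by
    exact ((hd2.mul (pbI1_hasDeriv a s hh x)).add
      (hd1.mul (pbI2_hasDeriv a b s hh x))).div_const _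
  have := hB2.sub hG2
  convert! this using 1
  simp only [pbSol, pbGInt, pbB]
  rw [key]
  have hW' : Real.sinh (s*(b-x)) * Real.cosh (s*(x-a))
      + Real.cosh (s*(b-x)) * Real.sinh (s*(x-a)) ≠ 0 := by rw [← key]; exact hsinh.ne'
  have hW'' : Real.sinh (s*(b-x)) * Real.cosh (s*(x-a))
      + Real.sinh (s*(x-a)) * Real.cosh (s*(b-x)) ≠ 0 := by
    rw [mul_comm (Real.sinh (s*(x-a)))]; exact hW'
  field_simp
  ring

lemma abs_intInt_le {f g : ℝ → ℝ} {a b : ℝ} (hab : a ≤ b)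
    (hf : IntervalIntegrable f MeasureTheory.volume a b)
    (hg : IntervalIntegrable g MeasureTheory.volume a b)
    (hbd : ∀ y ∈ Icc a b, |f y| ≤ g y) :
    |∫ y in a..b, f y| ≤ ∫ y in a..b, g y := by
  rw [abs_le]
  refine ⟨?_, intervalIntegral.integral_mono_on hab hf hg
      (fun y hy => le_trans (le_abs_self _) (hbd y hy))⟩
  have h1 : ∫ y in a..b, -g y ≤ ∫ y in a..b, f y :=
    intervalIntegral.integral_mono_on hab hg.neg hf
      (fun y hy => by have := (abs_le.1 (hbd y hy)).1; simpa using this)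
  rw [intervalIntegral.integral_neg] at h1
  linarith


lemma pbSol_bdry_a (a b s φ0 : ℝ) (h : ℝ → ℝ) : pbSol a b s φ0 h a = φ0 := by
  have hC : Real.cosh (s*(b-a)/2) ≠ 0 := (Real.cosh_pos _).ne'
  simp only [pbSol, pbGInt, pbI1, pbI2, pbB, intervalIntegral.integral_same, sub_self,
    mul_zero, Real.sinh_zero, zero_mul, add_zero, zero_add, zero_div, sub_zero]
  rw [show s*(a-(a+b)/2) = -(s*(b-a)/2) by ring, Real.cosh_neg]
  field_simp

lemma pbSol_bdry_b (a b s φ0 : ℝ) (h : ℝ → ℝ) : pbSol a b s φ0 h b = φ0 := by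
  have hC : Real.cosh (s*(b-a)/2) ≠ 0 := (Real.cosh_pos _).ne'
  simp only [pbSol, pbGInt, pbI1, pbI2, pbB, intervalIntegral.integral_same, sub_self,
    mul_zero, Real.sinh_zero, zero_mul, add_zero, zero_add, zero_div, sub_zero]
  rw [show s*(b-(a+b)/2) = s*(b-a)/2 by ring]
  field_simp

lemma pbGInt_sub (a b s : ℝ) {h₁ h₂ : ℝ → ℝ} (hh₁ : Continuous h₁) (hh₂ : Continuous h₂)
    (x : ℝ) : pbGInt a b s h₁ x - pbGInt a b s h₂ x
      = pbGInt a b s (fun y => h₁ y - h₂ y) x := by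
  have e1 : pbI1 a s (fun y => h₁ y - h₂ y) x = pbI1 a s h₁ x - pbI1 a s h₂ x := by
    have h0 : (fun y => Real.sinh (s*(y-a)) * (h₁ y - h₂ y))
        = fun y => Real.sinh (s*(y-a)) * h₁ y - Real.sinh (s*(y-a)) * h₂ y :=
      funext fun y => mul_sub _ _ _
    show (∫ y in a..x, Real.sinh (s*(y-a)) * (h₁ y - h₂ y)) = _
    rw [h0]
    exact intervalIntegral.integral_sub (((cont_v1 a s).mul hh₁).intervalIntegrable _ _)
      (((cont_v1 a s).mul hh₂).intervalIntegrable _ _)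
  have e2 : pbI2 a b s (fun y => h₁ y - h₂ y) x = pbI2 a b s h₁ x - pbI2 a b s h₂ x := by
    have h0 : (fun y => Real.sinh (s*(b-y)) * (h₁ y - h₂ y))
        = fun y => Real.sinh (s*(b-y)) * h₁ y - Real.sinh (s*(b-y)) * h₂ y :=
      funext fun y => mul_sub _ _ _
    show (∫ y in x..b, Real.sinh (s*(b-y)) * (h₁ y - h₂ y)) = _
    rw [h0]
    exact intervalIntegral.integral_sub (((cont_v2 b s).mul hh₁).intervalIntegrable _ _)
      (((cont_v2 b s).mul hh₂).intervalIntegrable _ _)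
  simp only [pbGInt, e1, e2]
  ring

set_option maxHeartbeats 1000000 in
lemma pbGInt_bound (a b : ℝ) (hab : a < b) {s : ℝ} (hs : 0 < s) {h : ℝ → ℝ}
    (hh : Continuous h) {D : ℝ} (hD : 0 ≤ D) (hbd : ∀ y ∈ Icc a b, |h y| ≤ D) :
    ∀ x ∈ Icc a b, |pbGInt a b s h x|
      ≤ D * (Real.cosh (s*(b-a)/2) - 1) / (s^2 * Real.cosh (s*(b-a)/2)) := by
  intro x hx
  have hax : a ≤ x := hx.1
  have hxb : x ≤ b := hx.2
  -- I1 bound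
  have hIv1 : (∫ y in a..x, Real.sinh (s*(y-a)) * D)
      = D * (Real.cosh (s*(x-a)) - 1) / s := by
    have hder : ∀ y ∈ uIcc a x, HasDerivAt (fun y => Real.cosh (s*(y-a)) * D / s)
        (Real.sinh (s*(y-a)) * D) y := by
      intro y _
      have h2 := (((((hasDerivAt_id y).sub_const a).const_mul s).cosh).mul_const D).div_const s
      convert! h2 using 1
      simp only [Pi.sub_apply, id]
      field_simp
    rw [intervalIntegral.integral_eq_sub_of_hasDerivAt hder
      (((cont_v1 a s).mul continuous_const).intervalIntegrable _ _)]
    rw [sub_self, mul_zero, Real.cosh_zero]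
    field_simp
  have hb1 : |pbI1 a s h x| ≤ D * (Real.cosh (s*(x-a)) - 1) / s := by
    rw [← hIv1]
    apply abs_intInt_le hax (((cont_v1 a s).mul hh).intervalIntegrable _ _)
      (((cont_v1 a s).mul continuous_const).intervalIntegrable _ _)
    intro y hy
    have hv1 : 0 ≤ Real.sinh (s*(y-a)) := Real.sinh_nonneg_iff.2 (by nlinarith [hy.1])
    simp only [Pi.mul_apply]
    rw [abs_mul, abs_of_nonneg hv1]
    exact mul_le_mul_of_nonneg_left (le_trans (le_refl _) (hbd y ⟨hy.1, le_trans hy.2 hxb⟩)) hv1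
  -- I2 bound
  have hIv2 : (∫ y in x..b, Real.sinh (s*(b-y)) * D)
      = D * (Real.cosh (s*(b-x)) - 1) / s := by
    have hder : ∀ y ∈ uIcc x b, HasDerivAt (fun y => -(Real.cosh (s*(b-y))) * D / s)
        (Real.sinh (s*(b-y)) * D) y := by
      intro y _
      have h2 := (((((hasDerivAt_const y b).sub (hasDerivAt_id y)).const_mul s).cosh).neg.mul_const D).div_const s
      convert! h2 using 1
      simp only [Pi.sub_apply, id]
      field_simp
      ring
    rw [intervalIntegral.integral_eq_sub_of_hasDerivAt hder
      (((cont_v2 b s).mul continuous_const).intervalIntegrable _ _)]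
    rw [sub_self, mul_zero, Real.cosh_zero]
    field_simp
    ring
  have hb2 : |pbI2 a b s h x| ≤ D * (Real.cosh (s*(b-x)) - 1) / s := by
    rw [← hIv2]
    apply abs_intInt_le hxb (((cont_v2 b s).mul hh).intervalIntegrable _ _)
      (((cont_v2 b s).mul continuous_const).intervalIntegrable _ _)
    intro y hy
    have hv2 : 0 ≤ Real.sinh (s*(b-y)) := Real.sinh_nonneg_iff.2 (by nlinarith [hy.2])
    simp only [Pi.mul_apply]
    rw [abs_mul, abs_of_nonneg hv2]
    exact mul_le_mul_of_nonneg_left (hbd y ⟨le_trans hax hy.1, hy.2⟩) hv2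
  -- assemble
  have hv1x : 0 ≤ Real.sinh (s*(x-a)) := Real.sinh_nonneg_iff.2 (by nlinarith)
  have hv2x : 0 ≤ Real.sinh (s*(b-x)) := Real.sinh_nonneg_iff.2 (by nlinarith)
  have hWpos : 0 < s * Real.sinh (s*(b-a)) := by
    have := Real.sinh_pos_iff.2 (show 0 < s*(b-a) by nlinarith)
    positivity
  have habs : |pbGInt a b s h x| ≤
      (Real.sinh (s*(b-x)) * (D * (Real.cosh (s*(x-a)) - 1) / s)
       + Real.sinh (s*(x-a)) * (D * (Real.cosh (s*(b-x)) - 1) / s))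
      / (s * Real.sinh (s*(b-a))) := by
    rw [pbGInt, abs_div, abs_of_pos hWpos]
    apply div_le_div_of_nonneg_right ?_ hWpos.le |>.trans (le_refl _)
    calc |Real.sinh (s*(b-x)) * pbI1 a s h x + Real.sinh (s*(x-a)) * pbI2 a b s h x|
        ≤ |Real.sinh (s*(b-x)) * pbI1 a s h x| + |Real.sinh (s*(x-a)) * pbI2 a b s h x| :=
          abs_add_le _ _
      _ = Real.sinh (s*(b-x)) * |pbI1 a s h x| + Real.sinh (s*(x-a)) * |pbI2 a b s h x| := by
          rw [abs_mul, abs_mul, abs_of_nonneg hv2x, abs_of_nonneg hv1x]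
      _ ≤ _ := add_le_add (mul_le_mul_of_nonneg_left hb1 hv2x)
          (mul_le_mul_of_nonneg_left hb2 hv1x)
  -- hyperbolic identities
  have e1 : Real.sinh (s*(x-a)) = Real.sinh (s*(b-a)/2) * Real.cosh (s*(x-(a+b)/2))
      + Real.cosh (s*(b-a)/2) * Real.sinh (s*(x-(a+b)/2)) := by
    rw [← Real.sinh_add]; congr 1; ring
  have e2 : Real.sinh (s*(b-x)) = Real.sinh (s*(b-a)/2) * Real.cosh (s*(x-(a+b)/2))
      - Real.cosh (s*(b-a)/2) * Real.sinh (s*(x-(a+b)/2)) := by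
    rw [← Real.sinh_sub]; congr 1; ring
  have e3 : Real.cosh (s*(x-a)) = Real.cosh (s*(b-a)/2) * Real.cosh (s*(x-(a+b)/2))
      + Real.sinh (s*(b-a)/2) * Real.sinh (s*(x-(a+b)/2)) := by
    rw [← Real.cosh_add]; congr 1; ring
  have e4 : Real.cosh (s*(b-x)) = Real.cosh (s*(b-a)/2) * Real.cosh (s*(x-(a+b)/2))
      - Real.sinh (s*(b-a)/2) * Real.sinh (s*(x-(a+b)/2)) := by
    rw [← Real.cosh_sub]; congr 1; ring
  have e5 : Real.sinh (s*(b-a)) = 2 * Real.sinh (s*(b-a)/2) * Real.cosh (s*(b-a)/2) := by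
    have h5 := Real.sinh_two_mul (s*(b-a)/2)
    rw [show 2*(s*(b-a)/2) = s*(b-a) by ring] at h5
    exact h5
  set SU := Real.sinh (s*(b-a)/2) with hSUdef
  set CU := Real.cosh (s*(b-a)/2) with hCUdef
  set SV := Real.sinh (s*(x-(a+b)/2)) with hSVdef
  set CV := Real.cosh (s*(x-(a+b)/2)) with hCVdef
  have pyth : CV^2 - SV^2 = 1 := Real.cosh_sq_sub_sinh_sq _
  have hSU : 0 < SU := Real.sinh_pos_iff.2 (by nlinarith)
  have hCU : 1 ≤ CU := Real.one_le_cosh _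
  have hCV : 1 ≤ CV := Real.one_le_cosh _
  have numeq : (SU*CV - CU*SV) * (D * ((CU*CV + SU*SV) - 1) / s)
      + (SU*CV + CU*SV) * (D * ((CU*CV - SU*SV) - 1) / s)
      = 2*D*SU*(CU - CV)/s := by
    field_simp
    linear_combination (2*D*SU*CU) * pyth
  refine habs.trans ?_
  rw [e1, e2, e3, e4, e5, numeq]
  rw [div_div, div_le_div_iff₀ (by positivity) (by positivity)]
  have hfac : 0 ≤ D * SU * CU * (CV - 1) := by
    apply mul_nonneg (mul_nonneg (mul_nonneg hD hSU.le) (by linarith)) (by linarith)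
  nlinarith [mul_nonneg hfac (sq_nonneg s), sq_nonneg s, hs]

section FixedPoint

noncomputable def pbT {a b : ℝ} (hab : a ≤ b) (s φ0 lam : ℝ) (gtr : ℝ → ℝ)
    (hgt : Continuous gtr) (ψ : C(Set.Icc a b, ℝ)) : C(Set.Icc a b, ℝ) :=
  ⟨fun p => pbSol a b s φ0
      (fun y => gtr (ψ (Set.projIcc a b hab y)) - lam * ψ (Set.projIcc a b hab y)) p.1, by
    have c1 : Continuous (fun y => ψ (Set.projIcc a b hab y)) :=
      ψ.continuous.comp continuous_projIcc
    have hc : Continuous (fun y => gtr (ψ (Set.projIcc a b hab y))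
        - lam * ψ (Set.projIcc a b hab y)) :=
      (hgt.comp c1).sub (continuous_const.mul c1)
    exact (continuous_iff_continuousAt.2
      fun x => (pbSol_hasDeriv a b s φ0 hc x).continuousAt).comp continuous_subtype_val⟩

end FixedPoint

set_option maxHeartbeats 1000000 in
/-- For every `L > 0` and every `φ0`, the Dirichlet problem
`φ'' + f(φ) = 0` on `[-L/2, L/2]`, `φ(-L/2) = φ(L/2) = φ0`, has exactly one
twice continuously differentiable solution. -/
theorem stmt3 {N : ℕ} (hN : 1 ≤ N) (z c : Fin N → ℝ)
    (hz : ∀ j, z j ≠ 0) (hc : ∀ j, 0 < c j) (q0 : ℝ)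
    (f : ℝ → ℝ)
    (hf : ∀ φ : ℝ, f φ = q0 + ∑ j, z j * c j * Real.exp (-(z j) * φ))
    (L : ℝ) (hL : 0 < L) (φ0 : ℝ) :
    (∃ φ u : ℝ → ℝ, IsPBSol f (-(L / 2)) (L / 2) φ u ∧
      φ (-(L / 2)) = φ0 ∧ φ (L / 2) = φ0) ∧
    (∀ φ₁ u₁ φ₂ u₂ : ℝ → ℝ,
      IsPBSol f (-(L / 2)) (L / 2) φ₁ u₁ →
      IsPBSol f (-(L / 2)) (L / 2) φ₂ u₂ →
      φ₁ (-(L / 2)) = φ0 → φ₁ (L / 2) = φ0 →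
      φ₂ (-(L / 2)) = φ0 → φ₂ (L / 2) = φ0 →
      ∀ x ∈ Set.Icc (-(L / 2)) (L / 2), φ₁ x = φ₂ x) := by
  have hfeq : f = pbF z c q0 := funext hf
  have hfc : Continuous f := hfeq ▸ pbF_cont z c q0
  have hanti : StrictAnti f := hfeq ▸ pbF_strictAnti hN hz hc
  set a : ℝ := -(L/2) with ha
  set b : ℝ := L/2 with hb
  have hab : a < b := by rw [ha, hb]; linarith
  -- constants
  set C0 : ℝ := 1 + |f φ0| with hC0def
  have hC0 : 0 < C0 := by positivity
  set r : ℝ := C0 * L^2 / 8 with hrdef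
  have hr : 0 < r := by positivity
  set R : ℝ := |φ0| + r with hRdef
  set lam : ℝ := ∑ j, (z j)^2 * c j * Real.exp (|z j| * R) with hlamdef
  have hlam : 0 < lam := by
    have : Nonempty (Fin N) := Fin.pos_iff_nonempty.1 hN
    apply Finset.sum_pos
    · intro j _
      have := hc j
      have := hz j
      positivity
    · exact Finset.univ_nonempty
  set s : ℝ := Real.sqrt lam with hsdef
  have hs : 0 < s := Real.sqrt_pos.2 hlam
  have hs2 : s^2 = lam := Real.sq_sqrt hlam.le
  -- clamp
  set m' : ℝ := φ0 - r with hm'def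
  set M' : ℝ := φ0 + r with hM'def
  set pcl : ℝ → ℝ := fun y => min M' (max m' y) with hpcl
  have hpcl_mono : Monotone pcl := fun u v huv =>
    min_le_min (le_refl _) (max_le_max (le_refl _) huv)
  have hpcl_id : ∀ y, m' ≤ y → y ≤ M' → pcl y = y := by
    intro y h1 h2
    simp only [hpcl]
    rw [max_eq_right h1, min_eq_right h2]
  have hpcl_absR : ∀ y, |pcl y| ≤ R := by
    intro y
    have h1 : m' ≤ pcl y := le_min (by simp only [hm'def, hM'def]; linarith) (le_max_left _ _)
    have h2 : pcl y ≤ M' := min_le_left _ _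
    rw [abs_le]
    constructor
    · simp only [hRdef, hm'def] at h1 ⊢
      have := neg_abs_le φ0
      linarith
    · simp only [hRdef, hM'def] at h2 ⊢
      have := le_abs_self φ0
      linarith
  have hpcl_lip : ∀ u v, |pcl u - pcl v| ≤ |u - v| := by
    intro u v
    have h1 : |pcl u - pcl v| ≤ |max m' u - max m' v| := by
      simp only [hpcl]
      rw [min_comm M' (max m' u), min_comm M' (max m' v)]
      exact (abs_min_sub_min_le_max _ _ _ _).trans (by simp)
    refine h1.trans ?_
    rw [max_comm m' u, max_comm m' v]
    exact abs_max_sub_max_le_abs _ _ _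
  have hpcl_cont : Continuous pcl := by
    simp only [hpcl]
    exact continuous_const.min (continuous_const.max continuous_id)
  -- truncated nonlinearity
  set gtr : ℝ → ℝ := fun y => -(f (pcl y)) with hgtrdef
  have hgt_cont : Continuous gtr := (hfc.comp hpcl_cont).neg
  have hgt_mono : Monotone gtr := by
    intro u v huv
    simp only [hgtrdef]
    have := hanti.antitone (hpcl_mono huv)
    linarith
  have hgt_lip : ∀ u v, |gtr u - gtr v| ≤ lam * |u - v| := by
    intro u v
    have h1 := pbF_lip z c q0 hc R lam hlamdef (pcl u) (pcl v) (hpcl_absR u) (hpcl_absR v)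
    rw [← hfeq] at h1
    refine h1.trans ?_
    exact mul_le_mul_of_nonneg_left (hpcl_lip u v) hlam.le
  have hkey : ∀ u v : ℝ, |(gtr u - lam*u) - (gtr v - lam*v)| ≤ lam * |u - v| := by
    intro u v
    rcases le_total u v with h | h
    · have h1 : gtr u ≤ gtr v := hgt_mono h
      have h2 : gtr v - gtr u ≤ lam * (v - u) := by
        have := hgt_lip u v
        rw [abs_sub_comm, abs_of_nonneg (by linarith), abs_sub_comm,
          abs_of_nonneg (by linarith)] at this
        exact this
      have habs : |u - v| = v - u := by
        rw [abs_sub_comm]; exact abs_of_nonneg (by linarith)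
      rw [habs, abs_le]
      constructor <;> nlinarith [hlam.le]
    · have h1 : gtr v ≤ gtr u := hgt_mono h
      have h2 : gtr u - gtr v ≤ lam * (u - v) := by
        have := hgt_lip u v
        rw [abs_of_nonneg (by linarith), abs_of_nonneg (by linarith)] at this
        exact this
      have habs : |u - v| = u - v := abs_of_nonneg (by linarith)
      rw [habs, abs_le]
      constructor <;> nlinarith [hlam.le]
  -- the operator
  set T : C(Set.Icc a b, ℝ) → C(Set.Icc a b, ℝ) := pbT hab.le s φ0 lam gtr hgt_cont with hTdef
  have hHcont : ∀ ψ : C(Set.Icc a b, ℝ), Continuous (fun y => gtr (ψ (Set.projIcc a b hab.le y))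
      - lam * ψ (Set.projIcc a b hab.le y)) := by
    intro ψ
    have c1 : Continuous (fun y => ψ (Set.projIcc a b hab.le y)) :=
      ψ.continuous.comp continuous_projIcc
    exact (hgt_cont.comp c1).sub (continuous_const.mul c1)
  -- contraction estimate
  set CU : ℝ := Real.cosh (s*(b-a)/2) with hCUdef
  have hCU1 : 1 ≤ CU := Real.one_le_cosh _
  have hCUpos : 0 < CU := by rw [hCUdef]; exact Real.cosh_pos _
  set ρ : ℝ := 1 - 1/CU with hρdef
  have hρ0 : 0 ≤ ρ := by
    have : 1/CU ≤ 1 := by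
      rw [div_le_one hCUpos]; exact hCU1
    simp only [hρdef]; linarith
  have hρ1 : ρ < 1 := by
    have : 0 < 1/CU := by positivity
    simp only [hρdef]; linarith
  have hTdist : ∀ ψ1 ψ2 : C(Set.Icc a b, ℝ), dist (T ψ1) (T ψ2) ≤ ρ * dist ψ1 ψ2 := by
    intro ψ1 ψ2
    rw [ContinuousMap.dist_le (by positivity)]
    intro p
    set h1 : ℝ → ℝ := fun y => gtr (ψ1 (Set.projIcc a b hab.le y))
        - lam * ψ1 (Set.projIcc a b hab.le y) with hh1def
    set h2 : ℝ → ℝ := fun y => gtr (ψ2 (Set.projIcc a b hab.le y))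
        - lam * ψ2 (Set.projIcc a b hab.le y) with hh2def
    have hd : (T ψ1) p - (T ψ2) p = -(pbGInt a b s (fun y => h1 y - h2 y) p.1) := by
      show pbSol a b s φ0 h1 p.1 - pbSol a b s φ0 h2 p.1 = _
      rw [← pbGInt_sub a b s (hHcont ψ1) (hHcont ψ2)]
      simp only [pbSol]
      ring
    have hbd : ∀ y ∈ Set.Icc a b, |h1 y - h2 y| ≤ lam * dist ψ1 ψ2 := by
      intro y _
      have := hkey (ψ1 (Set.projIcc a b hab.le y)) (ψ2 (Set.projIcc a b hab.le y))
      refine this.trans ?_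
      apply mul_le_mul_of_nonneg_left _ hlam.le
      rw [← Real.dist_eq]
      exact ContinuousMap.dist_apply_le_dist _
    have hb := pbGInt_bound a b hab hs ((hHcont ψ1).sub (hHcont ψ2))
      (by positivity : (0:ℝ) ≤ lam * dist ψ1 ψ2) hbd p.1 p.2
    rw [Real.dist_eq, hd, abs_neg]
    refine hb.trans (le_of_eq ?_)
    rw [hs2, ← hCUdef]
    have hρeq : ρ = (CU - 1)/CU := by
      rw [hρdef, eq_div_iff hCUpos.ne']
      field_simp
    rw [hρeq, div_mul_eq_mul_div, div_eq_div_iff (by positivity) (by positivity)]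
    ring
  have hcontr : ContractingWith (Real.toNNReal ρ) T := by
    constructor
    · rw [← NNReal.coe_lt_coe]
      simp [Real.coe_toNNReal ρ hρ0]
      exact hρ1
    · apply LipschitzWith.of_dist_le_mul
      intro ψ1 ψ2
      rw [Real.coe_toNNReal ρ hρ0]
      exact hTdist ψ1 ψ2
  set φfix : C(Set.Icc a b, ℝ) := ContractingWith.fixedPoint T hcontr with hφfixdef
  have hfixeq : T φfix = φfix := hcontr.fixedPoint_isFixedPt
  set hΨ : ℝ → ℝ := fun y => gtr (φfix (Set.projIcc a b hab.le y))
      - lam * φfix (Set.projIcc a b hab.le y) with hhΨdef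
  have hhΨcont : Continuous hΨ := hHcont φfix
  set Φ : ℝ → ℝ := pbSol a b s φ0 hΨ with hΦdef
  set U : ℝ → ℝ := pbSolD a b s φ0 hΨ with hUdef
  have hU : ∀ x, HasDerivAt Φ (U x) x := pbSol_hasDeriv a b s φ0 hhΨcont
  have hU' : ∀ x, HasDerivAt U (s^2 * Φ x + hΨ x) x := pbSolD_hasDeriv a b hab hs φ0 hhΨcont
  have hΦcont : Continuous Φ := continuous_iff_continuousAt.2 fun x => (hU x).continuousAt
  have hΦa : Φ a = φ0 := pbSol_bdry_a a b s φ0 hΨ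
  have hΦb : Φ b = φ0 := pbSol_bdry_b a b s φ0 hΨ
  have hΦfix : ∀ y (hy : y ∈ Set.Icc a b), φfix ⟨y, hy⟩ = Φ y := by
    intro y hy
    conv_lhs => rw [← hfixeq]
    rfl
  have hΨeq : ∀ y (hy : y ∈ Set.Icc a b), hΨ y = gtr (Φ y) - lam * Φ y := by
    intro y hy
    simp only [hhΨdef]
    rw [Set.projIcc_of_mem hab.le hy, hΦfix y hy]
  -- a priori bounds
  have hsqle : ∀ x : ℝ, x ∈ Set.Icc a b → x^2 ≤ L^2/4 := by
    intro x hx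
    have h1 : -(L/2) ≤ x := hx.1
    have h2 : x ≤ L/2 := hx.2
    nlinarith
  have hgtr_ge : ∀ y : ℝ, φ0 ≤ y → 1 - C0 ≤ gtr y := by
    intro y hy
    have h1 : pcl φ0 ≤ pcl y := hpcl_mono hy
    have h2 : pcl φ0 = φ0 := hpcl_id φ0 (by simp only [hm'def]; linarith) (by simp only [hM'def]; linarith)
    have h3 : gtr φ0 ≤ gtr y := hgt_mono hy
    have h4 : gtr φ0 = -(f φ0) := by
      simp only [hgtrdef, h2]
    have h5 : -|f φ0| ≤ -(f φ0) := by
      have := le_abs_self (f φ0); linarith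
    simp only [hC0def]
    have := neg_abs_le (f φ0)
    linarith
  have hgtr_le : ∀ y : ℝ, y ≤ φ0 → gtr y ≤ C0 - 1 := by
    intro y hy
    have h2 : pcl φ0 = φ0 := hpcl_id φ0 (by simp only [hm'def]; linarith) (by simp only [hM'def]; linarith)
    have h3 : gtr y ≤ gtr φ0 := hgt_mono hy
    have h4 : gtr φ0 = -(f φ0) := by simp only [hgtrdef, h2]
    simp only [hC0def]
    have := neg_abs_le (f φ0)
    have := le_abs_self (f φ0)
    linarith
  -- upper bound
  have hup : ∀ x ∈ Set.Icc a b, Φ x ≤ φ0 + C0/2 * (L^2/4 - x^2) := by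
    set v : ℝ → ℝ := fun x => φ0 + C0/2 * (L^2/4 - x^2) - Φ x with hvdef
    have hvcont : ContinuousOn v (Set.Icc a b) :=
      (Continuous.continuousOn (by fun_prop)).sub hΦcont.continuousOn
    obtain ⟨x0, hx0, hmin⟩ := isCompact_Icc.exists_isMinOn (nonempty_Icc.2 hab.le) hvcont
    intro x hx
    rcases le_or_gt 0 (v x0) with h0 | h0
    · have := hmin hx
      simp only [v] at this ⊢
      have : (0:ℝ) ≤ φ0 + C0/2 * (L^2/4 - x^2) - Φ x := le_trans h0 this
      linarith
    · exfalso
      have hva : v a = 0 := by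
        simp only [hvdef, hΦa]; simp only [ha, hb]
        ring
      have hvb : v b = 0 := by
        simp only [hvdef, hΦb]; simp only [hb]
        ring
      have hxa : x0 ≠ a := by rintro rfl; rw [hva] at h0; linarith
      have hxb : x0 ≠ b := by rintro rfl; rw [hvb] at h0; linarith
      have hx0' : x0 ∈ Ioo a b := ⟨lt_of_le_of_ne hx0.1 (Ne.symm hxa), lt_of_le_of_ne hx0.2 hxb⟩
      set v' : ℝ → ℝ := fun x => -(C0 * x) - U x with hv'def
      set v'' : ℝ → ℝ := fun x => -C0 - (s^2 * Φ x + hΨ x) with hv''def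
      have hpoly : ∀ t : ℝ, HasDerivAt (fun x : ℝ => φ0 + C0/2 * (L^2/4 - x^2)) (-(C0 * t)) t := by
        intro t
        have := (((hasDerivAt_const t (L^2/4)).sub (hasDerivAt_pow 2 t)).const_mul (C0/2)).const_add φ0
        convert! this using 1
        simp
        ring
      have hv1 : ∀ t ∈ Ioo a b, HasDerivAt v (v' t) t :=
        fun t _ => (hpoly t).sub (hU t)
      have hv2 : ∀ t ∈ Ioo a b, HasDerivAt v' (v'' t) t := by
        intro t _
        have h1 : HasDerivAt (fun x : ℝ => -(C0 * x)) (-(C0 * 1)) t :=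
          (((hasDerivAt_id t).const_mul C0)).neg
        have := h1.sub (hU' t)
        convert! this using 1
        simp only [hv''def]
        ring
      have hccv : ContinuousOn v'' (Ioo a b) := by
        apply Continuous.continuousOn
        simp only [hv''def]
        fun_prop
      have hz0 : v' x0 = 0 := by
        have hlm : IsLocalMin v x0 := hmin.isLocalMin (Icc_mem_nhds hx0'.1 hx0'.2)
        exact hlm.hasDerivAt_eq_zero (hv1 x0 hx0')
      have hneg : v'' x0 < 0 := by
        have hΦge : φ0 ≤ Φ x0 := by
          have : v x0 < 0 := h0
          simp only [hvdef] at this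
          have hsq := hsqle x0 hx0
          nlinarith
        have hge := hgtr_ge (Φ x0) hΦge
        simp only [hv''def]
        rw [hs2, hΨeq x0 hx0]
        have : lam * Φ x0 + (gtr (Φ x0) - lam * Φ x0) = gtr (Φ x0) := by ring
        nlinarith
      obtain ⟨y, hy, hlt⟩ := pb_not_min hx0' hv1 hv2 hccv hz0 hneg
      exact absurd (hmin (Ioo_subset_Icc_self hy)) (not_le.2 hlt)
  -- lower bound
  have hlo : ∀ x ∈ Set.Icc a b, φ0 - C0/2 * (L^2/4 - x^2) ≤ Φ x := by
    set v : ℝ → ℝ := fun x => Φ x - (φ0 - C0/2 * (L^2/4 - x^2)) with hvdef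
    have hvcont : ContinuousOn v (Set.Icc a b) :=
      hΦcont.continuousOn.sub (Continuous.continuousOn (by fun_prop))
    obtain ⟨x0, hx0, hmin⟩ := isCompact_Icc.exists_isMinOn (nonempty_Icc.2 hab.le) hvcont
    intro x hx
    rcases le_or_gt 0 (v x0) with h0 | h0
    · have := hmin hx
      simp only [v] at this ⊢
      have : (0:ℝ) ≤ Φ x - (φ0 - C0/2 * (L^2/4 - x^2)) := le_trans h0 this
      linarith
    · exfalso
      have hva : v a = 0 := by
        simp only [hvdef, hΦa]; simp only [ha, hb]
        ring
      have hvb : v b = 0 := by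
        simp only [hvdef, hΦb]; simp only [hb]
        ring
      have hxa : x0 ≠ a := by rintro rfl; rw [hva] at h0; linarith
      have hxb : x0 ≠ b := by rintro rfl; rw [hvb] at h0; linarith
      have hx0' : x0 ∈ Ioo a b := ⟨lt_of_le_of_ne hx0.1 (Ne.symm hxa), lt_of_le_of_ne hx0.2 hxb⟩
      set v' : ℝ → ℝ := fun x => U x - C0 * x with hv'def
      set v'' : ℝ → ℝ := fun x => (s^2 * Φ x + hΨ x) - C0 with hv''def
      have hpoly : ∀ t : ℝ, HasDerivAt (fun x : ℝ => φ0 - C0/2 * (L^2/4 - x^2)) (C0 * t) t := by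
        intro t
        have h0 := ((hasDerivAt_const t (L^2/4)).sub (hasDerivAt_pow 2 t)).const_mul (C0/2)
        have := (hasDerivAt_const t φ0).sub h0
        convert! this using 1
        simp
        ring
      have hv1 : ∀ t ∈ Ioo a b, HasDerivAt v (v' t) t :=
        fun t _ => (hU t).sub (hpoly t)
      have hv2 : ∀ t ∈ Ioo a b, HasDerivAt v' (v'' t) t := by
        intro t _
        have h1 : HasDerivAt (fun x : ℝ => C0 * x) (C0 * 1) t :=
          (hasDerivAt_id t).const_mul C0
        have := (hU' t).sub h1
        convert! this using 1
        simp only [hv''def]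
        ring
      have hccv : ContinuousOn v'' (Ioo a b) := by
        apply Continuous.continuousOn
        simp only [hv''def]
        fun_prop
      have hz0 : v' x0 = 0 := by
        have hlm : IsLocalMin v x0 := hmin.isLocalMin (Icc_mem_nhds hx0'.1 hx0'.2)
        exact hlm.hasDerivAt_eq_zero (hv1 x0 hx0')
      have hneg : v'' x0 < 0 := by
        have hΦle : Φ x0 ≤ φ0 := by
          have : v x0 < 0 := h0
          simp only [hvdef] at this
          have hsq := hsqle x0 hx0
          nlinarith
        have hle := hgtr_le (Φ x0) hΦle
        simp only [hv''def]
        rw [hs2, hΨeq x0 hx0]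
        nlinarith
      obtain ⟨y, hy, hlt⟩ := pb_not_min hx0' hv1 hv2 hccv hz0 hneg
      exact absurd (hmin (Ioo_subset_Icc_self hy)) (not_le.2 hlt)
  -- range, untruncation
  have hrange : ∀ x ∈ Set.Icc a b, m' ≤ Φ x ∧ Φ x ≤ M' := by
    intro x hx
    have h1 := hlo x hx
    have h2 := hup x hx
    have hsq := hsqle x hx
    constructor
    · simp only [hm'def, hrdef]
      nlinarith
    · simp only [hM'def, hrdef]
      nlinarith
  have hval : ∀ x (hx : x ∈ Set.Icc a b), s^2 * Φ x + hΨ x = -(f (Φ x)) := by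
    intro x hx
    rw [hs2, hΨeq x hx]
    have hcl : pcl (Φ x) = Φ x := hpcl_id _ (hrange x hx).1 (hrange x hx).2
    simp only [hgtrdef, hcl]
    ring
  refine ⟨⟨Φ, U, ?_, hΦa, hΦb⟩, ?_⟩
  · intro x hx
    refine ⟨(hU x).hasDerivWithinAt, ?_⟩
    have := (hU' x).hasDerivWithinAt (s := Set.Icc a b)
    rwa [hval x hx] at this
  · intro φ₁ u₁ φ₂ u₂ hS1 hS2 h1a h1b h2a h2b x hx
    have hle1 := pb_uniq_le hfc hanti hab hS1 hS2 (by rw [h1a, h2a]) (by rw [h1b, h2b]) x hx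
    have hle2 := pb_uniq_le hfc hanti hab hS2 hS1 (by rw [h1a, h2a]) (by rw [h1b, h2b]) x hx
    linarith
end

section
/- Assume either z_i z_j < 0 for some i, j, or z_j q_0 < 0 for all j, let φ* be the unique zero of f, and fix φ_0 < φ*. For α ∈ (φ_0, φ*) define the time-map T(α) = √2 ∫_{φ_0}^{α} (F(α) − F(φ))^{−1/2} dφ. Then T(α) is a finite convergent integral for every α ∈ (φ_0, φ*), T is strictly increasing on (φ_0, φ*), T(α) → 0 as α → φ_0⁺, and T(α) → +∞ as α → φ*⁻. -/
open Real Filter Set Topology MeasureTheory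

private lemma mvt_lower {F f : ℝ → ℝ} (hF : ∀ x, HasDerivAt F (f x) x)
    {a b m : ℝ} (hab : a ≤ b) (hm : ∀ t ∈ Set.Icc a b, m ≤ f t) :
    m * (b - a) ≤ F b - F a := by
  rcases eq_or_lt_of_le hab with rfl | hab'
  · simp
  have hcont : ContinuousOn F (Set.Icc a b) :=
    fun x _ => ((hF x).continuousAt).continuousWithinAt
  have hdiff : DifferentiableOn ℝ F (interior (Set.Icc a b)) :=
    fun x _ => ((hF x).differentiableAt).differentiableWithinAt
  exact (convex_Icc a b).mul_sub_le_image_sub_of_le_deriv hcont hdiff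
    (fun x hx => by rw [(hF x).deriv]; exact hm x (interior_subset hx))
    a (Set.left_mem_Icc.2 hab) b (Set.right_mem_Icc.2 hab) hab

private lemma mvt_upper {F f : ℝ → ℝ} (hF : ∀ x, HasDerivAt F (f x) x)
    {a b M : ℝ} (hab : a ≤ b) (hM : ∀ t ∈ Set.Icc a b, f t ≤ M) :
    F b - F a ≤ M * (b - a) := by
  rcases eq_or_lt_of_le hab with rfl | hab'
  · simp
  have hcont : ContinuousOn F (Set.Icc a b) :=
    fun x _ => ((hF x).continuousAt).continuousWithinAt
  have hdiff : DifferentiableOn ℝ F (interior (Set.Icc a b)) :=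
    fun x _ => ((hF x).differentiableAt).differentiableWithinAt
  exact (convex_Icc a b).image_sub_le_mul_sub_of_deriv_le hcont hdiff
    (fun x hx => by rw [(hF x).deriv]; exact hM x (interior_subset hx))
    a (Set.left_mem_Icc.2 hab) b (Set.right_mem_Icc.2 hab) hab

private lemma inv_sqrt_eq {t : ℝ} (ht : 0 ≤ t) :
    1 / Real.sqrt t = t ^ (-(1:ℝ)/2) := by
  rw [Real.sqrt_eq_rpow, one_div, ← Real.rpow_neg ht]
  norm_num

private lemma sqrt_scale {A c : ℝ} (hc : 0 < c) :
    c * (1 / Real.sqrt A) = 1 / Real.sqrt (A / c ^ 2) := by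
  rcases le_or_gt 0 A with hA | hA
  · rw [Real.sqrt_div hA, Real.sqrt_sq hc.le, one_div_div]
    ring
  · have h1 : Real.sqrt A = 0 := Real.sqrt_eq_zero'.mpr hA.le
    have h2 : Real.sqrt (A / c ^ 2) = 0 :=
      Real.sqrt_eq_zero'.mpr (div_nonpos_of_nonpos_of_nonneg hA.le (by positivity))
    rw [h1, h2]
    simp

-- integrable with blow-up like (x-a)^(-1/2) at the left endpoint
private lemma intInt_left {g : ℝ → ℝ} {a b C : ℝ} (hab : a < b) (hC : 0 ≤ C)
    (hmeas : AEStronglyMeasurable g (volume.restrict (Set.uIoc a b)))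
    (hbound : ∀ x ∈ Set.Ioc a b, |g x| ≤ C * (x - a) ^ (-(1:ℝ)/2)) :
    IntervalIntegrable g volume a b := by
  have h1 : IntervalIntegrable (fun x : ℝ => x ^ (-(1:ℝ)/2)) volume 0 (b - a) :=
    intervalIntegral.intervalIntegrable_rpow' (by norm_num)
  have h2 := (h1.comp_sub_right a).const_mul C
  have hbase : IntervalIntegrable (fun x => C * (x - a) ^ (-(1:ℝ)/2)) volume a b := by
    simpa using h2
  refine hbase.mono_fun hmeas ?_
  rw [uIoc_of_le hab.le]
  filter_upwards [ae_restrict_mem measurableSet_Ioc] with x hx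
  have h3 := hbound x hx
  have h4 : 0 ≤ C * (x - a) ^ (-(1:ℝ)/2) :=
    mul_nonneg hC (Real.rpow_nonneg (by linarith [hx.1]) _)
  rw [Real.norm_eq_abs, Real.norm_eq_abs, abs_of_nonneg h4]
  exact h3

-- integrable with blow-up like (b-x)^(-1/2) at the right endpoint
private lemma intInt_right {g : ℝ → ℝ} {a b C : ℝ} (hab : a < b) (hC : 0 ≤ C)
    (hmeas : AEStronglyMeasurable g (volume.restrict (Set.uIoc a b)))
    (hbound : ∀ x ∈ Set.Ioc a b, |g x| ≤ C * (b - x) ^ (-(1:ℝ)/2)) :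
    IntervalIntegrable g volume a b := by
  have h1 : IntervalIntegrable (fun x : ℝ => x ^ (-(1:ℝ)/2)) volume 0 (b - a) :=
    intervalIntegral.intervalIntegrable_rpow' (by norm_num)
  have h2 := ((h1.comp_sub_left b).symm.const_mul C)
  have hbase : IntervalIntegrable (fun x => C * (b - x) ^ (-(1:ℝ)/2)) volume a b := by
    simpa using h2
  refine hbase.mono_fun hmeas ?_
  rw [uIoc_of_le hab.le]
  filter_upwards [ae_restrict_mem measurableSet_Ioc] with x hx
  have h3 := hbound x hx
  have h4 : 0 ≤ C * (b - x) ^ (-(1:ℝ)/2) :=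
    mul_nonneg hC (Real.rpow_nonneg (by linarith [hx.2]) _)
  rw [Real.norm_eq_abs, Real.norm_eq_abs, abs_of_nonneg h4]
  exact h3

private lemma bound_aux {m t D : ℝ} (hm : 0 < m) (ht : 0 < t) (hD : m * t ≤ D) :
    1 / Real.sqrt D ≤ (1 / Real.sqrt m) * t ^ (-(1:ℝ)/2) := by
  have h1 : 1 / Real.sqrt D ≤ 1 / Real.sqrt (m * t) :=
    one_div_le_one_div_of_le (Real.sqrt_pos.2 (mul_pos hm ht)) (Real.sqrt_le_sqrt hD)
  have h2 : 1 / Real.sqrt (m * t) = (1 / Real.sqrt m) * (1 / Real.sqrt t) := by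
    rw [Real.sqrt_mul hm.le, one_div, mul_inv, one_div, one_div]
  rw [h2, inv_sqrt_eq ht.le] at h1
  exact h1

-- the gap estimate from below
private lemma Fgap {f F : ℝ → ℝ} (hF' : ∀ x, HasDerivAt F (f x) x)
    (hanti : StrictAnti f) {u v : ℝ} (huv : u ≤ v) :
    f v * (v - u) ≤ F v - F u :=
  mvt_lower hF' huv (fun t ht => hanti.antitone ht.2)

-- Part 1 : integrability
private lemma partI {f F : ℝ → ℝ} (hF' : ∀ x, HasDerivAt F (f x) x)
    (hanti : StrictAnti f) {φstar : ℝ} (hstar : f φstar = 0)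
    {φ0 α : ℝ} (hφ0α : φ0 < α) (hα : α < φstar) :
    IntervalIntegrable (fun φ => 1 / Real.sqrt (F α - F φ)) volume φ0 α := by
  have hFc : Continuous F :=
    continuous_iff_continuousAt.mpr (fun x => (hF' x).continuousAt)
  have hfα : 0 < f α := by
    have := hanti hα
    rw [hstar] at this
    exact this
  have hmeas : AEStronglyMeasurable (fun φ => 1 / Real.sqrt (F α - F φ))
      (volume.restrict (Set.uIoc φ0 α)) := by
    have h1 : Continuous fun φ => Real.sqrt (F α - F φ) :=
      Real.continuous_sqrt.comp (continuous_const.sub hFc)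
    have : Measurable fun φ => 1 / Real.sqrt (F α - F φ) := by
      simp only [one_div]
      exact h1.measurable.inv
    exact this.aestronglyMeasurable
  refine intInt_right hφ0α (by positivity : (0:ℝ) ≤ 1 / Real.sqrt (f α)) hmeas ?_
  intro x hx
  rcases eq_or_lt_of_le hx.2 with rfl | hxα
  · simp [Real.zero_rpow (by norm_num : (-(1:ℝ)/2) ≠ 0)]
  · have hgap : f α * (α - x) ≤ F α - F x := Fgap hF' hanti hxα.le
    have h3 : (0:ℝ) ≤ 1 / Real.sqrt (F α - F x) := by positivity
    rw [abs_of_nonneg h3]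
    exact bound_aux hfα (by linarith) hgap

-- substitution representation of the time-map integral
private lemma reprI {F : ℝ → ℝ} {φ0 γ : ℝ} (hγ : φ0 < γ) :
    ∫ φ in φ0..γ, 1 / Real.sqrt (F γ - F φ)
      = ∫ s in (0:ℝ)..1, 1 / Real.sqrt ((F γ - F ((φ0 - γ) * s + γ)) / (γ - φ0) ^ 2) := by
  have hc : φ0 - γ ≠ 0 := by linarith
  have h1 := intervalIntegral.integral_comp_mul_add
    (a := (0:ℝ)) (b := 1) (fun φ => 1 / Real.sqrt (F γ - F φ)) hc γ
  have h2 : ∀ s : ℝ, 1 / Real.sqrt ((F γ - F ((φ0 - γ) * s + γ)) / (γ - φ0) ^ 2)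
      = (γ - φ0) * (1 / Real.sqrt (F γ - F ((φ0 - γ) * s + γ))) :=
    fun s => (sqrt_scale (by linarith)).symm
  rw [intervalIntegral.integral_congr (g := fun s =>
      (γ - φ0) * (1 / Real.sqrt (F γ - F ((φ0 - γ) * s + γ)))) (fun s _ => h2 s),
    intervalIntegral.integral_const_mul, h1]
  rw [show (φ0 - γ) * 0 + γ = γ by ring, show (φ0 - γ) * 1 + γ = φ0 by ring,
    intervalIntegral.integral_symm, smul_eq_mul]
  field_simp
  ring

-- key comparison of the scaled gaps
private lemma hcomp {f F : ℝ → ℝ} (hF' : ∀ x, HasDerivAt F (f x) x) (hfc : Continuous f)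
    (hanti : StrictAnti f) {φstar φ0 α β : ℝ} (hstar : f φstar = 0)
    (h0α : φ0 < α) (hαβ : α < β) (hβ : β < φstar) {s : ℝ} (hs : s ∈ Set.Ioo (0:ℝ) 1) :
    (F β - F ((φ0 - β) * s + β)) / (β - φ0) ^ 2
      < (F α - F ((φ0 - α) * s + α)) / (α - φ0) ^ 2 := by
  have key : ∀ γ, φ0 < γ → (F γ - F ((φ0 - γ) * s + γ)) / (γ - φ0) ^ 2
      = ∫ u in (0:ℝ)..s, (γ - φ0)⁻¹ * f ((φ0 - γ) * u + γ) := by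
    intro γ hγ
    have hc : φ0 - γ ≠ 0 := by linarith
    have h1 := intervalIntegral.integral_comp_mul_add (a := (0:ℝ)) (b := s) f hc γ
    have h2 : (∫ x in ((φ0 - γ) * s + γ)..γ, f x) = F γ - F ((φ0 - γ) * s + γ) :=
      intervalIntegral.integral_eq_sub_of_hasDerivAt (fun t _ => hF' t)
        (hfc.intervalIntegrable _ _)
    rw [intervalIntegral.integral_const_mul, h1, show (φ0 - γ) * 0 + γ = γ by ring,
      intervalIntegral.integral_symm, h2, smul_eq_mul,
      show (φ0 - γ)⁻¹ = -(γ - φ0)⁻¹ by rw [show φ0 - γ = -(γ - φ0) by ring, inv_neg],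
      div_eq_mul_inv, pow_two, mul_inv]
    ring
  rw [key β (by linarith), key α h0α]
  have hint1 : IntervalIntegrable (fun u => (α - φ0)⁻¹ * f ((φ0 - α) * u + α)) volume 0 s :=
    (Continuous.intervalIntegrable (by continuity) _ _)
  have hint2 : IntervalIntegrable (fun u => (β - φ0)⁻¹ * f ((φ0 - β) * u + β)) volume 0 s :=
    (Continuous.intervalIntegrable (by continuity) _ _)
  have hpos : 0 < ∫ u in (0:ℝ)..s, ((α - φ0)⁻¹ * f ((φ0 - α) * u + α)
      - (β - φ0)⁻¹ * f ((φ0 - β) * u + β)) := by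
    refine intervalIntegral.intervalIntegral_pos_of_pos_on (hint1.sub hint2) ?_ hs.1
    intro u hu
    set θα := (φ0 - α) * u + α with hθα
    set θβ := (φ0 - β) * u + β with hθβ
    have hu1 : u < 1 := lt_trans hu.2 hs.2
    have hθlt : θα < θβ := by
      have : θβ - θα = (1 - u) * (β - α) := by rw [hθα, hθβ]; ring
      nlinarith
    have hθβlt : θβ < φstar := by
      have : θβ < β := by rw [hθβ]; nlinarith [hu.1]
      linarith
    have hfβ : 0 < f θβ := by
      have := hanti hθβlt
      rw [hstar] at this
      exact this
    have hfαβ : f θβ < f θα := hanti hθlt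
    have hinv : (β - φ0)⁻¹ < (α - φ0)⁻¹ := by
      apply inv_strictAnti₀ <;> linarith
    have := mul_lt_mul'' hinv hfαβ (inv_nonneg.mpr (by linarith)) hfβ.le
    linarith
  rw [intervalIntegral.integral_sub hint1 hint2] at hpos
  linarith

private lemma partQint {f F : ℝ → ℝ} (hF' : ∀ x, HasDerivAt F (f x) x)
    (hanti : StrictAnti f) {φstar φ0 γ : ℝ} (hstar : f φstar = 0)
    (hγ0 : φ0 < γ) (hγ : γ < φstar) :
    IntervalIntegrable (fun s => 1 / Real.sqrt ((F γ - F ((φ0 - γ) * s + γ)) / (γ - φ0) ^ 2))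
      volume 0 1 := by
  have hFc : Continuous F :=
    continuous_iff_continuousAt.mpr (fun x => (hF' x).continuousAt)
  have hfγ : 0 < f γ := by have := hanti hγ; rwa [hstar] at this
  have hm : 0 < f γ / (γ - φ0) := div_pos hfγ (by linarith)
  have hmeas : AEStronglyMeasurable
      (fun s => 1 / Real.sqrt ((F γ - F ((φ0 - γ) * s + γ)) / (γ - φ0) ^ 2))
      (volume.restrict (Set.uIoc (0:ℝ) 1)) := by
    have h1 : Continuous fun s : ℝ => Real.sqrt ((F γ - F ((φ0 - γ) * s + γ)) / (γ - φ0) ^ 2) :=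
      Real.continuous_sqrt.comp (by fun_prop)
    have : Measurable fun s : ℝ =>
        1 / Real.sqrt ((F γ - F ((φ0 - γ) * s + γ)) / (γ - φ0) ^ 2) := by
      simp only [one_div]
      exact h1.measurable.inv
    exact this.aestronglyMeasurable
  refine intInt_left zero_lt_one
    (by positivity : (0:ℝ) ≤ 1 / Real.sqrt (f γ / (γ - φ0))) hmeas ?_
  intro s hs
  have hθ : (φ0 - γ) * s + γ ≤ γ := by nlinarith [hs.1]
  have hgap : f γ * (γ - ((φ0 - γ) * s + γ)) ≤ F γ - F ((φ0 - γ) * s + γ) :=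
    Fgap hF' hanti hθ
  have hgap2 : f γ / (γ - φ0) * s ≤ (F γ - F ((φ0 - γ) * s + γ)) / (γ - φ0) ^ 2 := by
    have hne : γ - φ0 ≠ 0 := sub_ne_zero.mpr (ne_of_gt hγ0)
    have heq : f γ / (γ - φ0) * s = f γ * (γ - ((φ0 - γ) * s + γ)) / (γ - φ0) ^ 2 := by
      field_simp
      ring
    rw [heq]
    gcongr
  have h3 : (0:ℝ) ≤ 1 / Real.sqrt ((F γ - F ((φ0 - γ) * s + γ)) / (γ - φ0) ^ 2) := by positivity
  rw [abs_of_nonneg h3]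
  rw [show s - 0 = s by ring]
  exact bound_aux hm hs.1 hgap2

private lemma partM {f F T : ℝ → ℝ} (hF' : ∀ x, HasDerivAt F (f x) x) (hfc : Continuous f)
    (hanti : StrictAnti f) {φstar φ0 : ℝ} (hstar : f φstar = 0)
    (hT : ∀ α : ℝ, T α = Real.sqrt 2 * ∫ φ in φ0..α, 1 / Real.sqrt (F α - F φ)) :
    StrictMonoOn T (Set.Ioo φ0 φstar) := by
  intro α hα β hβ hαβ
  have hTα : T α = Real.sqrt 2 * ∫ s in (0:ℝ)..1,
      1 / Real.sqrt ((F α - F ((φ0 - α) * s + α)) / (α - φ0) ^ 2) := by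
    rw [hT α, reprI hα.1]
  have hTβ : T β = Real.sqrt 2 * ∫ s in (0:ℝ)..1,
      1 / Real.sqrt ((F β - F ((φ0 - β) * s + β)) / (β - φ0) ^ 2) := by
    rw [hT β, reprI hβ.1]
  have hQα := partQint hF' hanti hstar hα.1 hα.2
  have hQβ := partQint hF' hanti hstar hβ.1 hβ.2
  have hfβ : 0 < f β := by have := hanti hβ.2; rwa [hstar] at this
  have hdiff : 0 < ∫ s in (0:ℝ)..1,
      (1 / Real.sqrt ((F β - F ((φ0 - β) * s + β)) / (β - φ0) ^ 2)
        - 1 / Real.sqrt ((F α - F ((φ0 - α) * s + α)) / (α - φ0) ^ 2)) := by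
    refine intervalIntegral.intervalIntegral_pos_of_pos_on (hQβ.sub hQα) ?_ zero_lt_one
    intro s hs
    have hθ : (φ0 - β) * s + β < β := by nlinarith [hs.1, hβ.1]
    have hgap : f β * (β - ((φ0 - β) * s + β)) ≤ F β - F ((φ0 - β) * s + β) :=
      Fgap hF' hanti hθ.le
    have hX : 0 < F β - F ((φ0 - β) * s + β) := by nlinarith [hs.1, hβ.1]
    have hβpos : 0 < (F β - F ((φ0 - β) * s + β)) / (β - φ0) ^ 2 := by
      apply div_pos hX
      have : (0:ℝ) < β - φ0 := by linarith [hβ.1]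
      positivity
    have hcmp := hcomp hF' hfc hanti hstar hα.1 hαβ hβ.2 hs
    have := one_div_lt_one_div_of_lt (Real.sqrt_pos.2 hβpos)
      (Real.sqrt_lt_sqrt hβpos.le hcmp)
    linarith
  rw [intervalIntegral.integral_sub hQβ hQα] at hdiff
  rw [hTα, hTβ]
  have h2 : (0:ℝ) < Real.sqrt 2 := by positivity
  nlinarith

-- value of the comparison integral ∫ (α - x)^(-1/2)
private lemma rpow_int_val {φ0 α : ℝ} (h : φ0 < α) :
    ∫ x in φ0..α, (α - x) ^ (-(1:ℝ)/2) = 2 * Real.sqrt (α - φ0) := by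
  rw [intervalIntegral.integral_comp_sub_left (fun t => t ^ (-(1:ℝ)/2)) α, sub_self]
  rw [integral_rpow (Or.inl (by norm_num))]
  rw [Real.zero_rpow (by norm_num), Real.sqrt_eq_rpow]
  norm_num
  ring

-- Part 3 : limit at φ0 from the right
private lemma partZ {f F T : ℝ → ℝ} (hF' : ∀ x, HasDerivAt F (f x) x)
    (hanti : StrictAnti f) {φstar φ0 : ℝ} (hstar : f φstar = 0) (hφ0 : φ0 < φstar)
    (hT : ∀ α : ℝ, T α = Real.sqrt 2 * ∫ φ in φ0..α, 1 / Real.sqrt (F α - F φ)) :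
    Tendsto T (𝓝[>] φ0) (𝓝 0) := by
  set mid := (φ0 + φstar) / 2 with hmid
  have hmid1 : φ0 < mid := by rw [hmid]; linarith
  have hmid2 : mid < φstar := by rw [hmid]; linarith
  have hfmid : 0 < f mid := by have := hanti hmid2; rwa [hstar] at this
  set Cm : ℝ := 1 / Real.sqrt (f mid) with hCm
  have hCm0 : 0 ≤ Cm := by positivity
  set u : ℝ → ℝ := fun α => Real.sqrt 2 * (Cm * (2 * Real.sqrt (α - φ0))) with hu
  have hbound : ∀ α ∈ Set.Ioo φ0 mid, T α ≤ u α := by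
    intro α hα
    have hint1 : IntervalIntegrable (fun φ => 1 / Real.sqrt (F α - F φ)) volume φ0 α :=
      partI hF' hanti hstar hα.1 (lt_trans hα.2 hmid2)
    have hbase : IntervalIntegrable (fun x => Cm * (α - x) ^ (-(1:ℝ)/2)) volume φ0 α := by
      have h1 : IntervalIntegrable (fun x : ℝ => x ^ (-(1:ℝ)/2)) volume 0 (α - φ0) :=
        intervalIntegral.intervalIntegrable_rpow' (by norm_num)
      have h2 := ((h1.comp_sub_left α).symm.const_mul Cm)
      simpa using h2
    have hmono : (∫ φ in φ0..α, 1 / Real.sqrt (F α - F φ))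
        ≤ ∫ x in φ0..α, Cm * (α - x) ^ (-(1:ℝ)/2) := by
      refine intervalIntegral.integral_mono_on hα.1.le hint1 hbase ?_
      intro x hx
      rcases eq_or_lt_of_le hx.2 with rfl | hxα
      · simp [Real.zero_rpow (by norm_num : (-(1:ℝ)/2) ≠ 0)]
      · have hfm : ∀ t ∈ Set.Icc x α, f mid ≤ f t := by
          intro t ht
          exact hanti.antitone (by linarith [ht.2, hα.2])
        have hgap : f mid * (α - x) ≤ F α - F x := mvt_lower hF' hxα.le hfm
        rw [hCm]
        exact bound_aux hfmid (by linarith) hgap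
    have hval : (∫ x in φ0..α, Cm * (α - x) ^ (-(1:ℝ)/2))
        = Cm * (2 * Real.sqrt (α - φ0)) := by
      rw [intervalIntegral.integral_const_mul, rpow_int_val hα.1]
    rw [hT α, hu]
    have := le_trans hmono (le_of_eq hval)
    nlinarith [Real.sqrt_nonneg 2, hmono, hval]
  have hlow : ∀ α ∈ Set.Ioo φ0 mid, 0 ≤ T α := by
    intro α hα
    rw [hT α]
    have : 0 ≤ ∫ φ in φ0..α, 1 / Real.sqrt (F α - F φ) :=
      intervalIntegral.integral_nonneg hα.1.le (fun x _ => by positivity)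
    positivity
  have humem : Set.Ioo φ0 mid ∈ 𝓝[>] φ0 := Ioo_mem_nhdsGT_of_mem ⟨le_refl φ0, hmid1⟩
  have hutend : Tendsto u (𝓝[>] φ0) (𝓝 0) := by
    have hc : Continuous u := by
      rw [hu]
      fun_prop
    have h0 : u φ0 = 0 := by rw [hu]; simp
    have := (hc.tendsto φ0).mono_left (nhdsWithin_le_nhds (s := Set.Ioi φ0))
    rwa [h0] at this
  refine tendsto_of_tendsto_of_tendsto_of_le_of_le' tendsto_const_nhds hutend ?_ ?_
  · filter_upwards [humem] with α hα using hlow α hα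
  · filter_upwards [humem] with α hα using hbound α hα

-- Part 4 : limit at φstar from the left
private lemma partT {f F T : ℝ → ℝ} (hF' : ∀ x, HasDerivAt F (f x) x)
    (hanti : StrictAnti f) {φstar φ0 L : ℝ} (hstar : f φstar = 0) (hφ0 : φ0 < φstar)
    (hL : 0 < L) (hfL : ∀ t ∈ Set.Icc φ0 φstar, f t ≤ L * (φstar - t))
    (hT : ∀ α : ℝ, T α = Real.sqrt 2 * ∫ φ in φ0..α, 1 / Real.sqrt (F α - F φ)) :
    Tendsto T (𝓝[<] φstar) atTop := by
  set CL : ℝ := 1 / Real.sqrt L with hCL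
  have hCL0 : 0 < CL := by positivity
  set v : ℝ → ℝ := fun α =>
    Real.sqrt 2 * (CL * (Real.log (φstar - φ0) - Real.log (φstar - α))) with hv
  have hlow : ∀ α ∈ Set.Ioo φ0 φstar, v α ≤ T α := by
    intro α hα
    have hfα : 0 < f α := by have := hanti hα.2; rwa [hstar] at this
    have hint1 : IntervalIntegrable (fun φ => 1 / Real.sqrt (F α - F φ)) volume φ0 α :=
      partI hF' hanti hstar hα.1 hα.2
    have hbint : IntervalIntegrable (fun φ => CL * (φstar - φ)⁻¹) volume φ0 α := by
      apply ContinuousOn.intervalIntegrable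
      apply ContinuousOn.mul continuousOn_const
      apply ContinuousOn.inv₀ (by fun_prop)
      intro x hx
      rw [Set.uIcc_of_le hα.1.le] at hx
      have : x < φstar := lt_of_le_of_lt hx.2 hα.2
      exact ne_of_gt (by linarith)
    -- a.e. pointwise bound
    have hae : (fun φ => CL * (φstar - φ)⁻¹)
        ≤ᵐ[volume.restrict (Set.Icc φ0 α)] (fun φ => 1 / Real.sqrt (F α - F φ)) := by
      have h0 : (volume.restrict (Set.Icc φ0 α)) {α} = 0 := by
        rw [Measure.restrict_apply (measurableSet_singleton α)]
        exact measure_mono_null Set.inter_subset_left (measure_singleton α)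
      have h1 : ∀ᵐ x ∂(volume.restrict (Set.Icc φ0 α)), x ≠ α := by
        rw [ae_iff]
        convert h0 using 2
        ext x
        simp
      filter_upwards [h1, ae_restrict_mem measurableSet_Icc] with x hxne hx
      have hxα : x < α := lt_of_le_of_ne hx.2 hxne
      have hxstar : x < φstar := lt_trans hxα hα.2
      have hub : ∀ t ∈ Set.Icc x α, f t ≤ L * (φstar - x) := by
        intro t ht
        have h2 : f t ≤ L * (φstar - t) :=
          hfL t ⟨le_trans hx.1 ht.1, by linarith [ht.2, hα.2]⟩
        nlinarith [ht.1]
      have hgap : F α - F x ≤ L * (φstar - x) * (α - x) := mvt_upper hF' hxα.le hub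
      have hgap2 : F α - F x ≤ (Real.sqrt L * (φstar - x)) ^ 2 := by
        have : (Real.sqrt L * (φstar - x)) ^ 2 = L * (φstar - x) ^ 2 := by
          rw [mul_pow, Real.sq_sqrt hL.le]
        nlinarith [hα.2]
      have h4 : Real.sqrt (F α - F x) ≤ Real.sqrt L * (φstar - x) := by
        have := Real.sqrt_le_sqrt hgap2
        rwa [Real.sqrt_sq (mul_nonneg (Real.sqrt_nonneg L) (by linarith))] at this
      have h5 : 0 < Real.sqrt (F α - F x) := by
        apply Real.sqrt_pos.2
        nlinarith [Fgap hF' hanti hxα.le (v := α) (u := x)]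
      have h6 := one_div_le_one_div_of_le h5 h4
      have h7 : 1 / (Real.sqrt L * (φstar - x)) = CL * (φstar - x)⁻¹ := by
        rw [hCL, one_div, one_div, mul_inv]
      rwa [h7] at h6
    have hmono := intervalIntegral.integral_mono_ae_restrict hα.1.le hbint hint1 hae
    have hval : (∫ φ in φ0..α, CL * (φstar - φ)⁻¹)
        = CL * (Real.log (φstar - φ0) - Real.log (φstar - α)) := by
      rw [intervalIntegral.integral_const_mul]
      congr 1
      rw [intervalIntegral.integral_comp_sub_left (fun t => t⁻¹) φstar]
      have h8 : (0:ℝ) ∉ Set.uIcc (φstar - α) (φstar - φ0) := by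
        rw [Set.uIcc_of_le (by linarith [hα.1])]
        intro hmem
        have := hmem.1
        have h9 : 0 < φstar - α := by linarith [hα.2]
        linarith
      rw [integral_inv h8, Real.log_div (by linarith [hα.1]) (by linarith [hα.2])]
    rw [hT α, hv]
    have := le_trans (le_of_eq hval.symm) hmono
    nlinarith [Real.sqrt_nonneg 2]
  have hvt : Tendsto v (𝓝[<] φstar) atTop := by
    have h1 : Tendsto (fun α => φstar - α) (𝓝[<] φstar) (𝓝[>] (0:ℝ)) := by
      rw [tendsto_nhdsWithin_iff]
      constructor
      · have hcont : Continuous (fun α : ℝ => φstar - α) := by fun_prop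
        have h := (hcont.tendsto φstar).mono_left (nhdsWithin_le_nhds (s := Set.Iio φstar))
        simpa using h
      · filter_upwards [self_mem_nhdsWithin] with α (hα : α < φstar)
        exact sub_pos.2 hα
    have h2 : Tendsto (fun α => Real.log (φstar - α)) (𝓝[<] φstar) atBot :=
      Real.tendsto_log_nhdsGT_zero.comp h1
    have h3 : Tendsto (fun α => Real.log (φstar - φ0) - Real.log (φstar - α))
        (𝓝[<] φstar) atTop := by
      have h4 := tendsto_neg_atBot_atTop.comp h2
      have h5 := tendsto_atTop_add_const_left _ (Real.log (φstar - φ0)) h4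
      simpa [sub_eq_add_neg] using h5
    have h6 : 0 < Real.sqrt 2 * CL := by positivity
    have h7 := Tendsto.const_mul_atTop h6 h3
    rw [hv]
    convert h7 using 2
    ring
  exact tendsto_atTop_mono' _ (by
    filter_upwards [Ioo_mem_nhdsLT hφ0] with α hα using hlow α hα) hvt

/-- In the saddle case, with `φ*` the unique zero of `f` and `φ0 < φ*`,
the time-map `T(α) = √2 ∫_{φ0}^{α} (F(α) - F(φ))^{-1/2} dφ` is a finite convergent
integral for each `α ∈ (φ0, φ*)`, is strictly increasing on `(φ0, φ*)`,
tends to `0` as `α → φ0⁺`, and tends to `+∞` as `α → φ*⁻`. -/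
theorem stmt4 {N : ℕ} (hN : 1 ≤ N) (z c : Fin N → ℝ)
    (hz : ∀ j, z j ≠ 0) (hc : ∀ j, 0 < c j) (q0 : ℝ)
    (f F : ℝ → ℝ)
    (hf : ∀ φ : ℝ, f φ = q0 + ∑ j, z j * c j * Real.exp (-(z j) * φ))
    (hF : ∀ φ : ℝ, F φ = q0 * φ - ∑ j, c j * Real.exp (-(z j) * φ))
    (hcase : (∃ i j, z i * z j < 0) ∨ (∀ j, z j * q0 < 0))
    (φstar : ℝ) (hstar : f φstar = 0)
    (φ0 : ℝ) (hφ0 : φ0 < φstar)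
    (T : ℝ → ℝ)
    (hT : ∀ α : ℝ, T α = Real.sqrt 2 * ∫ φ in φ0..α, 1 / Real.sqrt (F α - F φ)) :
    (∀ α ∈ Set.Ioo φ0 φstar,
      IntervalIntegrable (fun φ => 1 / Real.sqrt (F α - F φ)) volume φ0 α) ∧
    StrictMonoOn T (Set.Ioo φ0 φstar) ∧
    Tendsto T (𝓝[>] φ0) (𝓝 0) ∧
    Tendsto T (𝓝[<] φstar) atTop := by
  have hFfun : F = fun φ => q0 * φ - ∑ j, c j * Real.exp (-(z j) * φ) := funext hF
  have hffun : f = fun φ => q0 + ∑ j, z j * c j * Real.exp (-(z j) * φ) := funext hf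
  -- derivative of F is f
  have hF' : ∀ x : ℝ, HasDerivAt F (f x) x := by
    intro x
    have h2 : ∀ j : Fin N, HasDerivAt (fun φ : ℝ => c j * Real.exp (-(z j) * φ))
        (c j * (Real.exp (-(z j) * x) * (-(z j)))) x := by
      intro j
      have := (((hasDerivAt_id x).const_mul (-(z j))).exp).const_mul (c j)
      simpa using this
    have hsum := HasDerivAt.fun_sum (fun j (_ : j ∈ Finset.univ) => h2 j)
    have h1 : HasDerivAt (fun φ : ℝ => q0 * φ) q0 x := by
      simpa using (hasDerivAt_id x).const_mul q0
    have h3 := h1.fun_sub hsum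
    rw [hFfun]
    refine h3.congr_deriv ?_
    rw [hf x]
    rw [sub_eq_add_neg, ← Finset.sum_neg_distrib]
    congr 1
    exact Finset.sum_congr rfl (fun j _ => by ring)
  -- derivative of f
  have hf' : ∀ x : ℝ,
      HasDerivAt f (∑ j, (z j * c j) * (Real.exp (-(z j) * x) * (-(z j)))) x := by
    intro x
    have h2 : ∀ j : Fin N, HasDerivAt (fun φ : ℝ => z j * c j * Real.exp (-(z j) * φ))
        ((z j * c j) * (Real.exp (-(z j) * x) * (-(z j)))) x := by
      intro j
      have := (((hasDerivAt_id x).const_mul (-(z j))).exp).const_mul (z j * c j)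
      simpa using this
    have hsum := HasDerivAt.fun_sum (fun j (_ : j ∈ Finset.univ) => h2 j)
    have := (hasDerivAt_const x q0).fun_add hsum
    rw [hffun]
    simpa using this
  have hNe : (Finset.univ : Finset (Fin N)).Nonempty :=
    Finset.univ_nonempty_iff.mpr (Fin.pos_iff_nonempty.mp (by omega))
  have hanti : StrictAnti f := by
    apply strictAnti_of_deriv_neg
    intro x
    rw [(hf' x).deriv]
    apply Finset.sum_neg ?_ hNe
    intro j _
    have heq : z j * c j * (Real.exp (-(z j) * x) * (-(z j)))
        = -((z j) ^ 2 * (c j * Real.exp (-(z j) * x))) := by ring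
    have hz2 : 0 < (z j) ^ 2 := pow_two_pos_of_ne_zero (hz j)
    rw [heq, neg_lt_zero]
    exact mul_pos hz2 (mul_pos (hc j) (Real.exp_pos _))
  have hfc : Continuous f :=
    continuous_iff_continuousAt.mpr (fun x => (hf' x).differentiableAt.continuousAt)
  -- Lipschitz-type constant L near φstar
  set L : ℝ := ∑ j, (z j) ^ 2 * c j * (Real.exp (-(z j) * φ0) + Real.exp (-(z j) * φstar))
    with hLdef
  have hL : 0 < L := by
    apply Finset.sum_pos ?_ hNe
    intro j _
    have hz2 : 0 < (z j) ^ 2 := pow_two_pos_of_ne_zero (hz j)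
    exact mul_pos (mul_pos hz2 (hc j)) (add_pos (Real.exp_pos _) (Real.exp_pos _))
  have hfL : ∀ t ∈ Set.Icc φ0 φstar, f t ≤ L * (φstar - t) := by
    intro t ht
    have hdL : ∀ u ∈ Set.Icc t φstar,
        -L ≤ ∑ j, (z j * c j) * (Real.exp (-(z j) * u) * (-(z j))) := by
      intro u hu
      have hu0 : φ0 ≤ u := le_trans ht.1 hu.1
      have hterm : ∀ j : Fin N, -((z j) ^ 2 * c j
            * (Real.exp (-(z j) * φ0) + Real.exp (-(z j) * φstar)))
          ≤ (z j * c j) * (Real.exp (-(z j) * u) * (-(z j))) := by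
        intro j
        have hexp : Real.exp (-(z j) * u)
            ≤ Real.exp (-(z j) * φ0) + Real.exp (-(z j) * φstar) := by
          rcases lt_or_gt_of_ne (hz j) with hneg | hpos
          · have : -(z j) * u ≤ -(z j) * φstar := by nlinarith [hu.2]
            have h1 := Real.exp_le_exp.mpr this
            linarith [Real.exp_pos (-(z j) * φ0)]
          · have : -(z j) * u ≤ -(z j) * φ0 := by nlinarith
            have h1 := Real.exp_le_exp.mpr this
            linarith [Real.exp_pos (-(z j) * φstar)]
        have heq : (z j * c j) * (Real.exp (-(z j) * u) * (-(z j)))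
            = -((z j) ^ 2 * c j * Real.exp (-(z j) * u)) := by ring
        rw [heq, neg_le_neg_iff]
        have hz2 : (0:ℝ) ≤ (z j) ^ 2 * c j := mul_nonneg (sq_nonneg _) (hc j).le
        exact mul_le_mul_of_nonneg_left hexp hz2
      have := Finset.sum_le_sum (fun j (_ : j ∈ Finset.univ) => hterm j)
      rw [hLdef, ← Finset.sum_neg_distrib]
      exact this
    have hmvt := mvt_lower hf' ht.2 hdL
    rw [hstar] at hmvt
    have hring : -L * (φstar - t) = -(L * (φstar - t)) := by ring
    linarith
  refine ⟨fun α hα => partI hF' hanti hstar hα.1 hα.2,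
    partM hF' hfc hanti hstar hT,
    partZ hF' hanti hstar hφ0 hT,
    partT hF' hanti hstar hφ0 hL hfL hT⟩
end

section
/- Assume q_0 = 0 and z_j > 0 for all j, and fix φ_0 ∈ ℝ. For α > φ_0 define the time-map T(α) = √2 ∫_{φ_0}^{α} (F(α) − F(φ))^{−1/2} dφ. Then T(α) is finite for every α > φ_0, T is strictly increasing on (φ_0, ∞), T(α) → 0 as α → φ_0⁺, and T(α) → +∞ as α → +∞. -/
open Real Filter Set Topology MeasureTheory

/-- In the equilibrium-at-infinity case (`q0 = 0`, all `z j > 0`), with fixed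
`φ0`, the time-map `T(α) = √2 ∫_{φ0}^{α} (F(α) - F(φ))^{-1/2} dφ` is finite for each
`α > φ0`, strictly increasing on `(φ0, ∞)`, tends to `0` as `α → φ0⁺`,
and tends to `+∞` as `α → +∞`. -/
theorem stmt5 {N : ℕ} (hN : 1 ≤ N) (z c : Fin N → ℝ)
    (hz : ∀ j, z j ≠ 0) (hc : ∀ j, 0 < c j) (q0 : ℝ)
    (f F : ℝ → ℝ)
    (hf : ∀ φ : ℝ, f φ = q0 + ∑ j, z j * c j * Real.exp (-(z j) * φ))
    (hF : ∀ φ : ℝ, F φ = q0 * φ - ∑ j, c j * Real.exp (-(z j) * φ))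
    (hq0 : q0 = 0) (hzpos : ∀ j, 0 < z j)
    (φ0 : ℝ)
    (T : ℝ → ℝ)
    (hT : ∀ α : ℝ, T α = Real.sqrt 2 * ∫ φ in φ0..α, 1 / Real.sqrt (F α - F φ)) :
    (∀ α : ℝ, φ0 < α →
      IntervalIntegrable (fun φ => 1 / Real.sqrt (F α - F φ)) volume φ0 α) ∧
    StrictMonoOn T (Set.Ioi φ0) ∧
    Tendsto T (𝓝[>] φ0) (𝓝 0) ∧
    Tendsto T atTop atTop := by
  subst hq0
  have hNe : Nonempty (Fin N) := Fin.pos_iff_nonempty.mp hN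
  have hne : (Finset.univ : Finset (Fin N)).Nonempty := Finset.univ_nonempty
  -- basic facts about f and F
  have hfpos : ∀ x, 0 < f x := by
    intro x
    rw [hf, zero_add]
    exact Finset.sum_pos (fun j _ => mul_pos (mul_pos (hzpos j) (hc j)) (Real.exp_pos _)) hne
  have hfcont : Continuous f := by
    have : f = fun φ => 0 + ∑ j, z j * c j * Real.exp (-(z j) * φ) := funext hf
    rw [this]
    exact continuous_const.add (continuous_finset_sum _ fun j _ =>
      continuous_const.mul (Real.continuous_exp.comp (continuous_const.mul continuous_id)))
  have hfanti : StrictAnti f := by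
    intro x y hxy
    rw [hf, hf, zero_add, zero_add]
    refine Finset.sum_lt_sum_of_nonempty hne fun j _ => ?_
    have h1 : Real.exp (-(z j) * y) < Real.exp (-(z j) * x) := by
      apply Real.exp_lt_exp.mpr
      have := hzpos j
      nlinarith
    exact mul_lt_mul_of_pos_left h1 (mul_pos (hzpos j) (hc j))
  have hFd : ∀ x, HasDerivAt F (f x) x := by
    intro x
    have key : HasDerivAt (fun φ : ℝ => 0 * φ - ∑ j, c j * Real.exp (-(z j) * φ))
        (0 * 1 - ∑ j, c j * (Real.exp (-(z j) * x) * (-(z j) * 1))) x := by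
      refine HasDerivAt.sub ((hasDerivAt_id x).const_mul 0) (HasDerivAt.fun_sum fun j _ => ?_)
      exact (((hasDerivAt_id x).const_mul (-(z j))).exp).const_mul (c j)
    have hFe : F = fun φ : ℝ => 0 * φ - ∑ j, c j * Real.exp (-(z j) * φ) := funext hF
    rw [hFe, hf]
    convert key using 1
    rw [zero_add, zero_mul, zero_sub, ← Finset.sum_neg_distrib]
    exact Finset.sum_congr rfl fun j _ => by ring
  have hFcont : Continuous F := by
    have : Differentiable ℝ F := fun x => (hFd x).differentiableAt
    exact this.continuous
  have hFmono : StrictMono F :=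
    strictMono_of_deriv_pos fun x => by rw [(hFd x).deriv]; exact hfpos x
  have hFneg : ∀ x, F x < 0 := by
    intro x
    rw [hF, zero_mul, zero_sub, neg_lt_zero]
    exact Finset.sum_pos (fun j _ => mul_pos (hc j) (Real.exp_pos _)) hne
  have hFTC : ∀ a b : ℝ, (∫ x in a..b, f x) = F b - F a := fun a b =>
    intervalIntegral.integral_eq_sub_of_hasDerivAt (fun x _ => hFd x)
      (hfcont.intervalIntegrable a b)
  have hgrad : ∀ α φ : ℝ, φ ≤ α → f α * (α - φ) ≤ F α - F φ := by
    intro α φ hφ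
    have h1 : (∫ _x in φ..α, f α) ≤ ∫ x in φ..α, f x :=
      intervalIntegral.integral_mono_on hφ intervalIntegrable_const
        (hfcont.intervalIntegrable _ _) (fun x hx => hfanti.antitone hx.2)
    rw [hFTC, intervalIntegral.integral_const, smul_eq_mul] at h1
    nlinarith [h1]
  have hnn : ∀ s : ℝ, 0 ≤ 1 / Real.sqrt s := fun s => one_div_nonneg.mpr (Real.sqrt_nonneg _)
  have hrw : ∀ t : ℝ, 0 ≤ t → t ^ (-(1/2) : ℝ) = 1 / Real.sqrt t := by
    intro t ht
    rw [Real.rpow_neg ht, Real.sqrt_eq_rpow]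
    exact (one_div _).symm
  -- Part 1 : integrability
  have hInt : ∀ α : ℝ, φ0 < α →
      IntervalIntegrable (fun φ => 1 / Real.sqrt (F α - F φ)) volume φ0 α := by
    intro α hα
    have hm : AEStronglyMeasurable (fun φ => 1 / Real.sqrt (F α - F φ))
        (volume.restrict (Set.uIoc φ0 α)) := by
      apply Measurable.aestronglyMeasurable
      exact measurable_const.div
        (Real.continuous_sqrt.measurable.comp (measurable_const.sub hFcont.measurable))
    have h1 : IntervalIntegrable (fun x : ℝ => x ^ (-(1/2) : ℝ)) volume 0 (α - φ0) :=
      intervalIntegral.intervalIntegrable_rpow' (by norm_num)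
    have h2 := (h1.comp_sub_left α).symm
    simp only [sub_zero, sub_sub_cancel] at h2
    have hgint : IntervalIntegrable
        (fun φ : ℝ => 1 / Real.sqrt (f α) * (α - φ) ^ (-(1/2) : ℝ)) volume φ0 α :=
      h2.const_mul _
    apply hgint.mono_fun hm
    refine Filter.eventually_of_mem (ae_restrict_mem measurableSet_uIoc) fun x hx => ?_
    rw [Set.uIoc_of_le hα.le] at hx
    have hR : 0 ≤ 1 / Real.sqrt (f α) * (α - x) ^ (-(1/2) : ℝ) :=
      mul_nonneg (hnn _) (Real.rpow_nonneg (by linarith [hx.2]) _)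
    dsimp only
    rw [Real.norm_of_nonneg (hnn _), Real.norm_of_nonneg hR]
    rcases eq_or_lt_of_le hx.2 with heq | hlt
    · rw [heq]
      simp [Real.zero_rpow (by norm_num : (-(1/2) : ℝ) ≠ 0)]
    · have hD : 0 < F α - F x := sub_pos.mpr (hFmono hlt)
      have hfa := hfpos α
      have hxα : 0 < α - x := sub_pos.mpr hlt
      calc 1 / Real.sqrt (F α - F x) ≤ 1 / Real.sqrt (f α * (α - x)) := by
            apply one_div_le_one_div_of_le
            · exact Real.sqrt_pos.mpr (mul_pos hfa hxα)
            · exact Real.sqrt_le_sqrt (hgrad α x hlt.le)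
        _ = 1 / Real.sqrt (f α) * (α - x) ^ (-(1/2) : ℝ) := by
            rw [hrw _ hxα.le, Real.sqrt_mul hfa.le, div_mul_div_comm, one_mul]
  -- value of the comparison integral
  have hval : ∀ α : ℝ, φ0 ≤ α →
      (∫ φ in φ0..α, (α - φ) ^ (-(1/2) : ℝ)) = 2 * Real.sqrt (α - φ0) := by
    intro α hle
    rw [_root_.intervalIntegral.integral_comp_sub_left (fun x : ℝ => x ^ (-(1/2) : ℝ)) α]
    rw [show α - α = 0 by ring]
    rw [integral_rpow (Or.inl (by norm_num))]
    rw [show (-(1/2) : ℝ) + 1 = 1/2 by norm_num]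
    rw [Real.zero_rpow (by norm_num), Real.sqrt_eq_rpow]
    ring
  -- nonnegativity of T
  have hTnonneg : ∀ α : ℝ, φ0 < α → 0 ≤ T α := by
    intro α hα
    rw [hT]
    apply mul_nonneg (Real.sqrt_nonneg _)
    exact intervalIntegral.integral_nonneg hα.le fun x _ => hnn _
  -- substitution representation
  have e2 : ∀ a : ℝ, φ0 + (a - φ0) * 1 = a := fun a => by ring
  have haff : ∀ (a : ℝ), φ0 < a → ∀ g : ℝ → ℝ, IntervalIntegrable g volume φ0 a →
      IntervalIntegrable (fun s => g (φ0 + (a - φ0) * s)) volume 0 1 := by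
    intro a ha g hg
    have h1 := hg.comp_add_left φ0
    simp only [sub_self] at h1
    have h2 := h1.comp_mul_left (c := a - φ0)
    have hne' : a - φ0 ≠ 0 := by linarith
    rw [zero_div, div_self hne'] at h2
    exact h2
  have hrep : ∀ a : ℝ, φ0 < a → T a = Real.sqrt 2 *
      ∫ s in (0:ℝ)..1, (a - φ0) * (1 / Real.sqrt (F a - F (φ0 + (a - φ0) * s))) := by
    intro a ha
    have hne' : a - φ0 ≠ 0 := by linarith
    rw [hT]
    congr 1
    rw [intervalIntegral.integral_const_mul]
    have h := intervalIntegral.integral_comp_add_mul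
      (fun φ => 1 / Real.sqrt (F a - F φ)) hne' φ0 (a := 0) (b := 1)
    rw [show φ0 + (a - φ0) * 0 = φ0 by ring, e2 a] at h
    rw [h, smul_eq_mul]
    field_simp
  -- the inner-integral identity
  have hDeq : ∀ a : ℝ, φ0 < a → ∀ s : ℝ,
      F a - F (φ0 + (a - φ0) * s) = (a - φ0) * ∫ u in s..1, f (φ0 + (a - φ0) * u) := by
    intro a ha s
    have hne' : a - φ0 ≠ 0 := by linarith
    have h := intervalIntegral.integral_comp_add_mul f hne' φ0 (a := s) (b := 1)
    rw [e2 a, hFTC] at h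
    rw [h, smul_eq_mul]
    field_simp
  -- algebraic form of the integrand after substitution
  have hform : ∀ x I : ℝ, 0 < x → 0 < I →
      x * (1 / Real.sqrt (x * I)) = Real.sqrt (x / I) := by
    intro x I hx hI
    rw [Real.sqrt_mul hx.le, mul_one_div, Real.sqrt_div hx.le]
    have h1 : Real.sqrt x * Real.sqrt I ≠ 0 := by positivity
    have h2 : Real.sqrt I ≠ 0 := by positivity
    rw [div_eq_div_iff h1 h2, ← mul_assoc, Real.mul_self_sqrt hx.le]
  -- Part 2 : strict monotonicity
  have hSM : StrictMonoOn T (Set.Ioi φ0) := by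
    intro a ha b hb hab
    rw [Set.mem_Ioi] at ha hb
    have hUAint : IntervalIntegrable
        (fun s => (a - φ0) * (1 / Real.sqrt (F a - F (φ0 + (a - φ0) * s)))) volume 0 1 :=
      (haff a ha _ (hInt a ha)).const_mul _
    have hUBint : IntervalIntegrable
        (fun s => (b - φ0) * (1 / Real.sqrt (F b - F (φ0 + (b - φ0) * s)))) volume 0 1 :=
      (haff b hb _ (hInt b hb)).const_mul _
    have hpt : ∀ s ∈ Set.Ioo (0:ℝ) 1,
        (a - φ0) * (1 / Real.sqrt (F a - F (φ0 + (a - φ0) * s))) <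
        (b - φ0) * (1 / Real.sqrt (F b - F (φ0 + (b - φ0) * s))) := by
      intro s hs
      obtain ⟨hs0, hs1⟩ := hs
      have ha0 : (0:ℝ) < a - φ0 := by linarith
      have hb0 : (0:ℝ) < b - φ0 := by linarith
      have hcA : Continuous fun u : ℝ => f (φ0 + (a - φ0) * u) :=
        hfcont.comp (continuous_const.add (continuous_const.mul continuous_id))
      have hcB : Continuous fun u : ℝ => f (φ0 + (b - φ0) * u) :=
        hfcont.comp (continuous_const.add (continuous_const.mul continuous_id))
      have hIApos : 0 < ∫ u in s..1, f (φ0 + (a - φ0) * u) :=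
        intervalIntegral.intervalIntegral_pos_of_pos_on (hcA.intervalIntegrable _ _)
          (fun u _ => hfpos _) hs1
      have hIBpos : 0 < ∫ u in s..1, f (φ0 + (b - φ0) * u) :=
        intervalIntegral.intervalIntegral_pos_of_pos_on (hcB.intervalIntegrable _ _)
          (fun u _ => hfpos _) hs1
      have hIBA : (∫ u in s..1, f (φ0 + (b - φ0) * u)) ≤
          ∫ u in s..1, f (φ0 + (a - φ0) * u) := by
        apply intervalIntegral.integral_mono_on hs1.le (hcB.intervalIntegrable _ _)
          (hcA.intervalIntegrable _ _)
        intro u hu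
        apply hfanti.antitone
        have hu0 : 0 ≤ u := le_trans hs0.le hu.1
        nlinarith
      have hqlt : (a - φ0) / (∫ u in s..1, f (φ0 + (a - φ0) * u)) <
          (b - φ0) / (∫ u in s..1, f (φ0 + (b - φ0) * u)) :=
        div_lt_div₀ (by linarith) hIBA hb0.le hIBpos
      rw [hDeq a ha s, hDeq b hb s, hform _ _ ha0 hIApos, hform _ _ hb0 hIBpos]
      exact Real.sqrt_lt_sqrt (div_nonneg ha0.le hIApos.le) hqlt
    have hdiff : 0 < ∫ s in (0:ℝ)..1,
        ((b - φ0) * (1 / Real.sqrt (F b - F (φ0 + (b - φ0) * s))) -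
         (a - φ0) * (1 / Real.sqrt (F a - F (φ0 + (a - φ0) * s)))) :=
      intervalIntegral.intervalIntegral_pos_of_pos_on (hUBint.sub hUAint)
        (fun s hs => sub_pos.2 (hpt s hs)) one_pos
    rw [intervalIntegral.integral_sub hUBint hUAint] at hdiff
    rw [hrep a ha, hrep b hb]
    have h2 : (0:ℝ) < Real.sqrt 2 := Real.sqrt_pos.mpr (by norm_num)
    nlinarith
  -- upper bound for T near φ0
  have hK : 0 < f (φ0 + 1) := hfpos _
  have hub3 : ∀ α ∈ Set.Ioo φ0 (φ0 + 1),
      T α ≤ Real.sqrt 2 * (1 / Real.sqrt (f (φ0 + 1)) * (2 * Real.sqrt (α - φ0))) := by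
    intro α hmem
    obtain ⟨hα, hα1⟩ := hmem
    rw [hT]
    have hKα : f (φ0 + 1) ≤ f α := hfanti.antitone hα1.le
    have h1 : IntervalIntegrable (fun x : ℝ => x ^ (-(1/2) : ℝ)) volume 0 (α - φ0) :=
      intervalIntegral.intervalIntegrable_rpow' (by norm_num)
    have h2 := (h1.comp_sub_left α).symm
    simp only [sub_zero, sub_sub_cancel] at h2
    have hgint : IntervalIntegrable
        (fun φ : ℝ => 1 / Real.sqrt (f (φ0 + 1)) * (α - φ) ^ (-(1/2) : ℝ)) volume φ0 α :=
      h2.const_mul _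
    have hmono : (∫ φ in φ0..α, 1 / Real.sqrt (F α - F φ)) ≤
        ∫ φ in φ0..α, 1 / Real.sqrt (f (φ0 + 1)) * (α - φ) ^ (-(1/2) : ℝ) := by
      apply intervalIntegral.integral_mono_on hα.le (hInt α hα) hgint
      intro x hx
      rcases eq_or_lt_of_le hx.2 with heq | hlt
      · rw [heq]
        simp only [sub_self, Real.sqrt_zero, div_zero]
        rw [Real.zero_rpow (by norm_num)]
        simp
      · have hD : 0 < F α - F x := sub_pos.mpr (hFmono hlt)
        have hxα : 0 < α - x := sub_pos.mpr hlt
        calc 1 / Real.sqrt (F α - F x) ≤ 1 / Real.sqrt (f (φ0 + 1) * (α - x)) := by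
              apply one_div_le_one_div_of_le
              · exact Real.sqrt_pos.mpr (mul_pos hK hxα)
              · apply Real.sqrt_le_sqrt
                have := hgrad α x hlt.le
                nlinarith
          _ = 1 / Real.sqrt (f (φ0 + 1)) * (α - x) ^ (-(1/2) : ℝ) := by
              rw [hrw _ hxα.le, Real.sqrt_mul hK.le, div_mul_div_comm, one_mul]
    rw [intervalIntegral.integral_const_mul, hval α hα.le] at hmono
    have := mul_le_mul_of_nonneg_left hmono (Real.sqrt_nonneg 2)
    linarith
  refine ⟨hInt, hSM, ?_, ?_⟩
  · -- tendsto 0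
    have hcont : Continuous fun α : ℝ =>
        Real.sqrt 2 * (1 / Real.sqrt (f (φ0 + 1)) * (2 * Real.sqrt (α - φ0))) :=
      continuous_const.mul (continuous_const.mul (continuous_const.mul
        (Real.continuous_sqrt.comp (continuous_id.sub continuous_const))))
    have hupper : Tendsto (fun α : ℝ =>
        Real.sqrt 2 * (1 / Real.sqrt (f (φ0 + 1)) * (2 * Real.sqrt (α - φ0))))
        (𝓝[>] φ0) (𝓝 0) := by
      have h0 := (hcont.tendsto φ0).mono_left (nhdsWithin_le_nhds (s := Set.Ioi φ0))
      simpa using h0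
    apply tendsto_of_tendsto_of_tendsto_of_le_of_le' tendsto_const_nhds hupper
    · filter_upwards [self_mem_nhdsWithin] with α hα using hTnonneg α hα
    · filter_upwards [Ioo_mem_nhdsGT_of_mem
        (Set.left_mem_Ico.mpr (by linarith : φ0 < φ0 + 1))] with α hα using hub3 α hα
  · -- tendsto atTop
    have hFφ0 : 0 < -F φ0 := by linarith [hFneg φ0]
    have hC : 0 < 1 / Real.sqrt (-F φ0) := one_div_pos.mpr (Real.sqrt_pos.mpr hFφ0)
    have hlb : ∀ α : ℝ, φ0 < α →
        Real.sqrt 2 * (1 / Real.sqrt (-F φ0)) * (α - φ0) ≤ T α := by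
      intro α hα
      rw [hT]
      have hae : (fun _ : ℝ => 1 / Real.sqrt (-F φ0)) ≤ᵐ[volume.restrict (Set.Icc φ0 α)]
          fun φ => 1 / Real.sqrt (F α - F φ) := by
        have hne' : ∀ᵐ x : ℝ ∂volume, x ≠ α := by
          refine ae_iff.mpr ?_
          simpa using measure_singleton α
        filter_upwards [ae_restrict_mem measurableSet_Icc, ae_restrict_of_ae hne']
          with x hx hxne
        have hlt : x < α := lt_of_le_of_ne hx.2 hxne
        have hD : 0 < F α - F x := sub_pos.mpr (hFmono hlt)
        have hub : F α - F x ≤ -F φ0 := by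
          have h1 := hFneg α
          have h2 := hFmono.monotone hx.1
          linarith
        exact one_div_le_one_div_of_le (Real.sqrt_pos.mpr hD) (Real.sqrt_le_sqrt hub)
      have hmono := intervalIntegral.integral_mono_ae_restrict hα.le
        intervalIntegrable_const (hInt α hα) hae
      rw [intervalIntegral.integral_const, smul_eq_mul] at hmono
      have h2 : (0:ℝ) ≤ Real.sqrt 2 := Real.sqrt_nonneg 2
      nlinarith
    refine tendsto_atTop_mono' atTop
      (f₁ := fun α : ℝ => Real.sqrt 2 * (1 / Real.sqrt (-F φ0)) * (α - φ0)) ?_ ?_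
    · filter_upwards [eventually_gt_atTop φ0] with α hα using hlb α hα
    · have hpos : 0 < Real.sqrt 2 * (1 / Real.sqrt (-F φ0)) :=
        mul_pos (Real.sqrt_pos.mpr (by norm_num)) hC
      have h1 : Tendsto (fun α : ℝ => α - φ0) atTop atTop := by
        simpa [sub_eq_add_neg] using tendsto_atTop_add_const_right atTop (-φ0) tendsto_id
      exact Tendsto.const_mul_atTop hpos h1
end

section
/- Let α ∈ ℝ with f(α) < 0, let σ > 0, and let φ_s > α satisfy σ²/2 + F(φ_s) = F(α). Then 0 < σ²/(−2 f(φ_s)) < φ_s − α < σ²/(−2 f(α)). -/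
open Real Filter Set Topology

/-- If `f(α) < 0`, `σ > 0`, and `φ_s > α` satisfies `σ²/2 + F(φ_s) = F(α)`,
then `0 < σ²/(-2 f(φ_s)) < φ_s - α < σ²/(-2 f(α))`. -/
theorem stmt7 {N : ℕ} (hN : 1 ≤ N) (z c : Fin N → ℝ)
    (hz : ∀ j, z j ≠ 0) (hc : ∀ j, 0 < c j) (q0 : ℝ)
    (f F : ℝ → ℝ)
    (hf : ∀ φ : ℝ, f φ = q0 + ∑ j, z j * c j * Real.exp (-(z j) * φ))
    (hF : ∀ φ : ℝ, F φ = q0 * φ - ∑ j, c j * Real.exp (-(z j) * φ))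
    (α σ φs : ℝ) (hα : f α < 0) (hσ : 0 < σ)
    (hφs : α < φs) (heq : σ ^ 2 / 2 + F φs = F α) :
    0 < σ ^ 2 / (-(2 * f φs)) ∧
    σ ^ 2 / (-(2 * f φs)) < φs - α ∧
    φs - α < σ ^ 2 / (-(2 * f α)) := by
  -- F' = f
  have hF' : ∀ x : ℝ, HasDerivAt F (f x) x := by
    intro x
    have h2 : HasDerivAt (fun φ => ∑ j, c j * Real.exp (-(z j) * φ))
        (∑ j, c j * (Real.exp (-(z j) * x) * (-(z j)))) x := by
      apply HasDerivAt.fun_sum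
      intro j _
      simpa using (((hasDerivAt_id x).const_mul (-(z j))).exp).const_mul (c j)
    have h1 : HasDerivAt (fun φ : ℝ => q0 * φ) q0 x := by
      simpa using (hasDerivAt_id x).const_mul q0
    have h := h1.sub h2
    have heqF : F = fun φ => q0 * φ - ∑ j, c j * Real.exp (-(z j) * φ) := funext hF
    rw [heqF, hf]
    refine h.congr_deriv ?_
    rw [sub_eq_add_neg, ← Finset.sum_neg_distrib]
    congr 1
    apply Finset.sum_congr rfl
    intro j _
    ring
  -- f' negative
  have hf' : ∀ x : ℝ, HasDerivAt f (-(∑ j, z j ^ 2 * c j * Real.exp (-(z j) * x))) x := by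
    intro x
    have h2 : HasDerivAt (fun φ => ∑ j, z j * c j * Real.exp (-(z j) * φ))
        (∑ j, z j * c j * (Real.exp (-(z j) * x) * (-(z j)))) x := by
      apply HasDerivAt.fun_sum
      intro j _
      simpa using (((hasDerivAt_id x).const_mul (-(z j))).exp).const_mul (z j * c j)
    have h := h2.const_add q0
    have heqf : f = fun φ => q0 + ∑ j, z j * c j * Real.exp (-(z j) * φ) := funext hf
    rw [heqf]
    refine h.congr_deriv ?_
    rw [← Finset.sum_neg_distrib]
    apply Finset.sum_congr rfl
    intro j _
    ring
  have hfanti : StrictAnti f := by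
    apply strictAnti_of_deriv_neg
    intro x
    rw [(hf' x).deriv]
    have hpos : 0 < ∑ j, z j ^ 2 * c j * Real.exp (-(z j) * x) := by
      apply Finset.sum_pos
      · intro j _
        have h1 : 0 < z j ^ 2 := by
          have := hz j
          positivity
        exact mul_pos (mul_pos h1 (hc j)) (Real.exp_pos _)
      · exact Finset.univ_nonempty_iff.mpr (Fin.pos_iff_nonempty.mp hN)
    linarith
  -- mean value theorem
  obtain ⟨ξ, hξ, hξeq⟩ := exists_hasDerivAt_eq_slope F f hφs
    (fun x _ => (hF' x).continuousAt.continuousWithinAt) (fun x _ => hF' x)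
  have hξ1 : α < ξ := hξ.1
  have hξ2 : ξ < φs := hξ.2
  have hne : φs - α ≠ 0 := by linarith
  have key : σ ^ 2 / 2 = -(f ξ) * (φs - α) := by
    have : f ξ * (φs - α) = F φs - F α := by
      field_simp at hξeq; linarith [hξeq]
    nlinarith [this]
  have hfa : f ξ < f α := hfanti hξ1
  have hfs : f φs < f ξ := hfanti hξ2
  have hfsneg : f φs < 0 := by linarith
  have h1 : 0 < -(2 * f φs) := by linarith
  have h2 : 0 < -(2 * f α) := by linarith
  have hσ2 : 0 < σ ^ 2 := by positivity
  refine ⟨div_pos hσ2 h1, ?_, ?_⟩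
  · rw [div_lt_iff₀ h1]
    nlinarith
  · rw [lt_div_iff₀ h2]
    nlinarith
end

section
/- Let L > 0 and 0 < σ_2 < σ_1, and suppose for k = 1, 2 that φ_k : [−L/2, L/2] → ℝ is a twice continuously differentiable solution of φ_k″ + f(φ_k) = 0 with φ_k′(−L/2) = −σ_k and φ_k′(L/2) = σ_k. Then φ_2(0) < φ_1(0); that is, the midpoint potential α = φ(0) of the symmetric Neumann problem is strictly increasing in the surface charge σ. -/
open Real Filter Set Topology

/-- If `w` has a minimum on `[a,b]` at the left endpoint, its one-sided derivative there
is nonnegative. -/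
lemma min_left_deriv_nonneg {w : ℝ → ℝ} {a b d : ℝ} (hab : a < b)
    (hd : HasDerivWithinAt w d (Set.Icc a b) a)
    (hmin : ∀ x ∈ Set.Icc a b, w a ≤ w x) : 0 ≤ d := by
  have h := hasDerivWithinAt_iff_tendsto_slope.mp hd
  rw [Set.Icc_diff_left] at h
  haveI : (𝓝[Set.Ioc a b] a).NeBot := by
    apply mem_closure_iff_nhdsWithin_neBot.mp
    rw [closure_Ioc hab.ne]
    exact ⟨le_refl _, hab.le⟩
  refine ge_of_tendsto h ?_
  filter_upwards [self_mem_nhdsWithin] with x hx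
  rw [slope_def_field]
  have h1 : w a ≤ w x := hmin x ⟨hx.1.le, hx.2⟩
  have h2 : a < x := hx.1
  apply div_nonneg <;> linarith

/-- If `w` has a minimum on `[a,b]` at the right endpoint, its one-sided derivative there
is nonpositive. -/
lemma min_right_deriv_nonpos {w : ℝ → ℝ} {a b d : ℝ} (hab : a < b)
    (hd : HasDerivWithinAt w d (Set.Icc a b) b)
    (hmin : ∀ x ∈ Set.Icc a b, w b ≤ w x) : d ≤ 0 := by
  have h := hasDerivWithinAt_iff_tendsto_slope.mp hd
  rw [Set.Icc_sdiff_right] at h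
  haveI : (𝓝[Set.Ico a b] b).NeBot := by
    apply mem_closure_iff_nhdsWithin_neBot.mp
    rw [closure_Ico hab.ne]
    exact ⟨hab.le, le_refl _⟩
  refine le_of_tendsto h ?_
  filter_upwards [self_mem_nhdsWithin] with x hx
  rw [slope_def_field]
  have h1 : w b ≤ w x := hmin x ⟨hx.1, hx.2.le⟩
  have h2 : x < b := hx.2
  apply div_nonpos_of_nonneg_of_nonpos <;> linarith

/-- The midpoint potential `α = φ(0)` of the symmetric Neumann problem is
strictly increasing in the surface charge `σ`: if `0 < σ₂ < σ₁` and `φ₁, φ₂` solve the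
problem with charges `σ₁, σ₂` respectively, then `φ₂(0) < φ₁(0)`. -/
theorem stmt9 {N : ℕ} (hN : 1 ≤ N) (z c : Fin N → ℝ)
    (hz : ∀ j, z j ≠ 0) (hc : ∀ j, 0 < c j) (q0 : ℝ)
    (f : ℝ → ℝ)
    (hf : ∀ φ : ℝ, f φ = q0 + ∑ j, z j * c j * Real.exp (-(z j) * φ))
    (L : ℝ) (hL : 0 < L) (σ₁ σ₂ : ℝ) (hσ₂ : 0 < σ₂) (hσ : σ₂ < σ₁)
    (φ₁ u₁ φ₂ u₂ : ℝ → ℝ)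
    (h₁ : IsPBSol f (-(L / 2)) (L / 2) φ₁ u₁)
    (hb₁ : u₁ (-(L / 2)) = -σ₁ ∧ u₁ (L / 2) = σ₁)
    (h₂ : IsPBSol f (-(L / 2)) (L / 2) φ₂ u₂)
    (hb₂ : u₂ (-(L / 2)) = -σ₂ ∧ u₂ (L / 2) = σ₂) :
    φ₂ 0 < φ₁ 0 := by
  obtain ⟨hb1l, hb1r⟩ := hb₁
  obtain ⟨hb2l, hb2r⟩ := hb₂
  set a : ℝ := -(L / 2) with ha
  set b : ℝ := L / 2 with hbdef
  have hab : a < b := by rw [ha, hbdef]; linarith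
  haveI : Nonempty (Fin N) := ⟨⟨0, hN⟩⟩
  -- `f` is strictly decreasing
  have hanti : ∀ p q : ℝ, p < q → f q < f p := by
    intro p q hpq
    rw [hf p, hf q]
    have hterm : ∀ j : Fin N,
        z j * c j * Real.exp (-(z j) * q) < z j * c j * Real.exp (-(z j) * p) := by
      intro j
      rcases lt_or_gt_of_ne (hz j) with hzj | hzj
      · have he : Real.exp (-(z j) * p) < Real.exp (-(z j) * q) :=
          Real.exp_lt_exp.mpr (by nlinarith)
        have hzc : z j * c j < 0 := mul_neg_of_neg_of_pos hzj (hc j)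
        nlinarith [Real.exp_pos (-(z j) * p), Real.exp_pos (-(z j) * q)]
      · have he : Real.exp (-(z j) * q) < Real.exp (-(z j) * p) :=
          Real.exp_lt_exp.mpr (by nlinarith)
        have hzc : 0 < z j * c j := mul_pos hzj (hc j)
        nlinarith
    have hsum : ∑ j, z j * c j * Real.exp (-(z j) * q)
        < ∑ j, z j * c j * Real.exp (-(z j) * p) :=
      Finset.sum_lt_sum_of_nonempty Finset.univ_nonempty (fun j _ => hterm j)
    linarith
  -- derivative of `f`
  have hfd : ∀ t : ℝ,
      HasDerivAt f (∑ j, z j * c j * (Real.exp (-(z j) * t) * -(z j))) t := by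
    intro t
    have hfe : f = fun s => q0 + ∑ j, z j * c j * Real.exp (-(z j) * s) := funext hf
    rw [hfe]
    apply HasDerivAt.const_add
    apply HasDerivAt.fun_sum
    intro j _
    have hinner : HasDerivAt (fun s : ℝ => -(z j) * s) (-(z j)) t := by
      simpa using (hasDerivAt_id t).const_mul (-(z j))
    exact HasDerivAt.const_mul (z j * c j) hinner.exp
  -- continuity of the solutions
  have hcφ₁ : ContinuousOn φ₁ (Set.Icc a b) := fun x hx => ((h₁ x hx).1).continuousWithinAt
  have hcφ₂ : ContinuousOn φ₂ (Set.Icc a b) := fun x hx => ((h₂ x hx).1).continuousWithinAt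
  have hcu₁ : ContinuousOn u₁ (Set.Icc a b) := fun x hx => ((h₁ x hx).2).continuousWithinAt
  have hcu₂ : ContinuousOn u₂ (Set.Icc a b) := fun x hx => ((h₂ x hx).2).continuousWithinAt
  -- a uniform bound on the potentials
  obtain ⟨C₁, hC₁⟩ := isCompact_Icc.exists_bound_of_continuousOn hcφ₁
  obtain ⟨C₂, hC₂⟩ := isCompact_Icc.exists_bound_of_continuousOn hcφ₂
  set M : ℝ := max C₁ C₂ with hM
  have hM1 : ∀ x ∈ Set.Icc a b, |φ₁ x| ≤ M := by
    intro x hx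
    have := hC₁ x hx
    rw [Real.norm_eq_abs] at this
    exact le_trans this (le_max_left _ _)
  have hM2 : ∀ x ∈ Set.Icc a b, |φ₂ x| ≤ M := by
    intro x hx
    have := hC₂ x hx
    rw [Real.norm_eq_abs] at this
    exact le_trans this (le_max_right _ _)
  have hM0 : 0 ≤ M := le_trans (abs_nonneg _) (hM1 a ⟨le_refl _, hab.le⟩)
  -- Lipschitz constant for `f` on `[-M, M]`
  set Kf : ℝ := ∑ j, |z j| * c j * Real.exp (|z j| * M) * |z j| with hKf
  have hKf0 : 0 ≤ Kf := by
    apply Finset.sum_nonneg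
    intro j _
    have := (hc j).le
    positivity
  have hdbound : ∀ t ∈ Set.Icc (-M) M,
      ‖∑ j, z j * c j * (Real.exp (-(z j) * t) * -(z j))‖ ≤ Kf := by
    intro t ht
    rw [Real.norm_eq_abs]
    calc |∑ j, z j * c j * (Real.exp (-(z j) * t) * -(z j))|
        ≤ ∑ j, |z j * c j * (Real.exp (-(z j) * t) * -(z j))| :=
          Finset.abs_sum_le_sum_abs _ _
      _ ≤ Kf := by
          rw [hKf]
          apply Finset.sum_le_sum
          intro j _
          have habs : |z j * c j * (Real.exp (-(z j) * t) * -(z j))|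
              = |z j| * c j * Real.exp (-(z j) * t) * |z j| := by
            rw [abs_mul, abs_mul, abs_mul, abs_neg, abs_of_pos (hc j),
              abs_of_pos (Real.exp_pos _)]
            ring
          rw [habs]
          have hexp : Real.exp (-(z j) * t) ≤ Real.exp (|z j| * M) := by
            apply Real.exp_le_exp.mpr
            calc -(z j) * t ≤ |(-(z j)) * t| := le_abs_self _
              _ = |z j| * |t| := by rw [abs_mul, abs_neg]
              _ ≤ |z j| * M := by
                  apply mul_le_mul_of_nonneg_left _ (abs_nonneg _)
                  exact abs_le.mpr ⟨ht.1, ht.2⟩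
          have h0 : (0:ℝ) ≤ |z j| * c j := mul_nonneg (abs_nonneg _) (hc j).le
          exact mul_le_mul_of_nonneg_right
            (mul_le_mul_of_nonneg_left hexp h0) (abs_nonneg _)
  have hflip : ∀ p ∈ Set.Icc (-M) M, ∀ q ∈ Set.Icc (-M) M, |f q - f p| ≤ Kf * |q - p| := by
    intro p hp q hq
    have := (convex_Icc (-M) M).norm_image_sub_le_of_norm_hasDerivWithin_le
      (f' := fun t => ∑ j, z j * c j * (Real.exp (-(z j) * t) * -(z j)))
      (fun x hx => (hfd x).hasDerivWithinAt) hdbound hp hq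
    simpa [Real.norm_eq_abs] using this
  -- the difference of the two solutions
  set w : ℝ → ℝ := fun x => φ₁ x - φ₂ x with hw
  set v : ℝ → ℝ := fun x => u₁ x - u₂ x with hv
  have hwd : ∀ x ∈ Set.Icc a b, HasDerivWithinAt w (v x) (Set.Icc a b) x :=
    fun x hx => ((h₁ x hx).1).sub ((h₂ x hx).1)
  have hvd : ∀ x ∈ Set.Icc a b,
      HasDerivWithinAt v (f (φ₂ x) - f (φ₁ x)) (Set.Icc a b) x := by
    intro x hx
    have := ((h₁ x hx).2).sub ((h₂ x hx).2)
    rw [show f (φ₂ x) - f (φ₁ x) = -f (φ₁ x) - -f (φ₂ x) by ring]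
    exact this
  have hwc : ContinuousOn w (Set.Icc a b) := fun x hx => (hwd x hx).continuousWithinAt
  obtain ⟨x₀, hx₀, hminOn⟩ :=
    isCompact_Icc.exists_isMinOn (Set.nonempty_Icc.mpr hab.le) hwc
  have hmin : ∀ x ∈ Set.Icc a b, w x₀ ≤ w x := fun x hx => hminOn hx
  -- boundary values of v
  have hva : v a < 0 := by rw [hv]; simp only [hb1l, hb2l]; linarith
  have hvb : 0 < v b := by rw [hv]; simp only [hb1r, hb2r]; linarith
  -- the minimum is interior
  have hx₀a : x₀ ≠ a := by
    intro h
    have h0 : 0 ≤ v a := min_left_deriv_nonneg hab (hwd a ⟨le_refl _, hab.le⟩) (h ▸ hmin)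
    linarith
  have hx₀b : x₀ ≠ b := by
    intro h
    have h0 : v b ≤ 0 := min_right_deriv_nonpos hab (hwd b ⟨hab.le, le_refl _⟩) (h ▸ hmin)
    linarith
  have hx₀i : a < x₀ ∧ x₀ < b :=
    ⟨lt_of_le_of_ne hx₀.1 (Ne.symm hx₀a), lt_of_le_of_ne hx₀.2 hx₀b⟩
  have hIccnhds : Set.Icc a b ∈ 𝓝 x₀ := Icc_mem_nhds hx₀i.1 hx₀i.2
  have hwda : HasDerivAt w (v x₀) x₀ := (hwd x₀ hx₀).hasDerivAt hIccnhds
  have hlocmin : IsLocalMin w x₀ := by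
    exact hminOn.isLocalMin hIccnhds
  have hv0 : v x₀ = 0 := hlocmin.hasDerivAt_eq_zero hwda
  -- the minimum value is nonnegative
  have hwx₀ : 0 ≤ w x₀ := by
    by_contra hneg
    push_neg at hneg
    have hphi : φ₁ x₀ < φ₂ x₀ := by
      have : w x₀ < 0 := hneg
      rw [hw] at this
      simpa [sub_neg] using this
    have hd' : f (φ₂ x₀) - f (φ₁ x₀) < 0 := sub_neg.mpr (hanti _ _ hphi)
    have hvda : HasDerivAt v (f (φ₂ x₀) - f (φ₁ x₀)) x₀ := (hvd x₀ hx₀).hasDerivAt hIccnhds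
    have hslope := hasDerivAt_iff_tendsto_slope.mp hvda
    have hmono : 𝓝[>] x₀ ≤ 𝓝[≠] x₀ :=
      nhdsWithin_mono _ fun y hy => Set.mem_compl_singleton_iff.mpr (ne_of_gt hy)
    have h1 : ∀ᶠ x in 𝓝[>] x₀, slope v x₀ x < 0 :=
      (hslope.mono_left hmono).eventually (gt_mem_nhds hd')
    have h2 : ∀ᶠ x in 𝓝[>] x₀, v x < 0 := by
      filter_upwards [h1, self_mem_nhdsWithin] with x hx1 hx2
      rw [slope_def_field] at hx1
      have hxgt : x₀ < x := hx2
      rcases div_neg_iff.mp hx1 with ⟨hn, hdn⟩ | ⟨hn, hdn⟩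
      · linarith
      · linarith
    obtain ⟨uu, huu, hsub⟩ := mem_nhdsGT_iff_exists_Ioo_subset.mp h2
    set ub : ℝ := min uu b with hubdef
    have hub : x₀ < ub := lt_min huu hx₀i.2
    set x₁ : ℝ := (x₀ + ub) / 2 with hx₁def
    have hx₁l : x₀ < x₁ := by rw [hx₁def]; linarith
    have hx₁r : x₁ < ub := by rw [hx₁def]; linarith
    have hx₁b : x₁ < b := lt_of_lt_of_le hx₁r (min_le_right _ _)
    have hx₁u : x₁ < uu := lt_of_lt_of_le hx₁r (min_le_left _ _)
    have hIccsub : Set.Icc x₀ x₁ ⊆ Set.Icc a b := by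
      intro x hx
      exact ⟨le_trans hx₀i.1.le hx.1, le_trans hx.2 hx₁b.le⟩
    have hsa : StrictAntiOn w (Set.Icc x₀ x₁) := by
      apply strictAntiOn_of_deriv_neg (convex_Icc _ _) (hwc.mono hIccsub)
      intro x hx
      rw [interior_Icc] at hx
      have hxab : x ∈ Set.Ioo a b := ⟨lt_trans hx₀i.1 hx.1, lt_trans hx.2 hx₁b⟩
      have hda : HasDerivAt w (v x) x :=
        (hwd x (Set.Ioo_subset_Icc_self hxab)).hasDerivAt (Icc_mem_nhds hxab.1 hxab.2)
      rw [hda.deriv]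
      exact hsub ⟨hx.1, lt_trans hx.2 hx₁u⟩
    have hlt : w x₁ < w x₀ :=
      hsa ⟨le_refl _, hx₁l.le⟩ ⟨hx₁l.le, le_refl _⟩ hx₁l
    have hx₁mem : x₁ ∈ Set.Icc a b := hIccsub ⟨hx₁l.le, le_refl _⟩
    exact absurd (hmin x₁ hx₁mem) (not_le.mpr hlt)
  rcases eq_or_lt_of_le hwx₀ with heq | hlt
  · -- minimum value zero: ODE uniqueness forces the solutions to coincide, contradiction
    exfalso
    have hφeq : φ₁ x₀ = φ₂ x₀ := by
      have : w x₀ = 0 := heq.symm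
      rw [hw] at this
      linarith [sub_eq_zero.mp this]
    have hueq : u₁ x₀ = u₂ x₀ := by
      rw [hv] at hv0
      linarith [sub_eq_zero.mp hv0]
    set g : ℝ × ℝ → ℝ × ℝ := fun p => (p.2, -f p.1) with hg
    set sset : Set (ℝ × ℝ) := Set.Icc (-M) M ×ˢ (Set.univ : Set ℝ) with hsset
    set KK : NNReal := ⟨max 1 Kf, le_trans zero_le_one (le_max_left _ _)⟩ with hKK
    have hKKr : (KK : ℝ) = max 1 Kf := rfl
    have hgl : LipschitzOnWith KK g sset := by
      rw [lipschitzOnWith_iff_dist_le_mul]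
      intro p hp q hq
      rw [Prod.dist_eq, Prod.dist_eq, hKKr]
      simp only [hg, Real.dist_eq]
      have hD0 : (0:ℝ) ≤ max |p.1 - q.1| |p.2 - q.2| :=
        le_trans (abs_nonneg _) (le_max_left _ _)
      apply max_le
      · calc |p.2 - q.2| ≤ max |p.1 - q.1| |p.2 - q.2| := le_max_right _ _
          _ ≤ max 1 Kf * max |p.1 - q.1| |p.2 - q.2| := by
              nlinarith [le_max_left (1:ℝ) Kf]
      · have hlf := hflip q.1 hq.1 p.1 hp.1
        calc |(-f p.1) - (-f q.1)| = |f p.1 - f q.1| := by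
              rw [← abs_neg]; ring_nf
          _ ≤ Kf * |p.1 - q.1| := hlf
          _ ≤ max 1 Kf * max |p.1 - q.1| |p.2 - q.2| := by
              apply mul_le_mul (le_max_right _ _) (le_max_left _ _) (abs_nonneg _)
              exact le_trans hKf0 (le_max_right _ _)
    set P₁ : ℝ → ℝ × ℝ := fun x => (φ₁ x, u₁ x) with hP₁
    set P₂ : ℝ → ℝ × ℝ := fun x => (φ₂ x, u₂ x) with hP₂
    have hsubIcc : Set.Icc x₀ b ⊆ Set.Icc a b := fun x hx => ⟨le_trans hx₀i.1.le hx.1, hx.2⟩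
    have hmemIcc : ∀ t ∈ Set.Ico x₀ b, Set.Icc a b ∈ 𝓝[Set.Ici t] t := by
      intro t ht
      have h1 : Set.Ici t ∩ Set.Iio b ∈ 𝓝[Set.Ici t] t :=
        inter_mem_nhdsWithin _ (Iio_mem_nhds ht.2)
      apply Filter.mem_of_superset h1
      intro x hx
      exact ⟨le_trans (le_trans hx₀i.1.le ht.1) hx.1, hx.2.le⟩
    have hP₁d : ∀ t ∈ Set.Ico x₀ b, HasDerivWithinAt P₁ (g (P₁ t)) (Set.Ici t) t := by
      intro t ht
      have htab : t ∈ Set.Icc a b := ⟨le_trans hx₀i.1.le ht.1, ht.2.le⟩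
      exact (((h₁ t htab).1).prodMk ((h₁ t htab).2)).mono_of_mem_nhdsWithin (hmemIcc t ht)
    have hP₂d : ∀ t ∈ Set.Ico x₀ b, HasDerivWithinAt P₂ (g (P₂ t)) (Set.Ici t) t := by
      intro t ht
      have htab : t ∈ Set.Icc a b := ⟨le_trans hx₀i.1.le ht.1, ht.2.le⟩
      exact (((h₂ t htab).1).prodMk ((h₂ t htab).2)).mono_of_mem_nhdsWithin (hmemIcc t ht)
    have hP₁s : ∀ t ∈ Set.Ico x₀ b, P₁ t ∈ sset := by
      intro t ht
      have htab : t ∈ Set.Icc a b := ⟨le_trans hx₀i.1.le ht.1, ht.2.le⟩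
      have := abs_le.mp (hM1 t htab)
      exact Set.mem_prod.mpr ⟨⟨this.1, this.2⟩, trivial⟩
    have hP₂s : ∀ t ∈ Set.Ico x₀ b, P₂ t ∈ sset := by
      intro t ht
      have htab : t ∈ Set.Icc a b := ⟨le_trans hx₀i.1.le ht.1, ht.2.le⟩
      have := abs_le.mp (hM2 t htab)
      exact Set.mem_prod.mpr ⟨⟨this.1, this.2⟩, trivial⟩
    have hP₁c : ContinuousOn P₁ (Set.Icc x₀ b) := (hcφ₁.prodMk hcu₁).mono hsubIcc
    have hP₂c : ContinuousOn P₂ (Set.Icc x₀ b) := (hcφ₂.prodMk hcu₂).mono hsubIcc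
    have hinit : P₁ x₀ = P₂ x₀ := by
      rw [hP₁, hP₂]
      exact Prod.ext hφeq hueq
    have huniq : Set.EqOn P₁ P₂ (Set.Icc x₀ b) :=
      ODE_solution_unique_of_mem_Icc_right (v := fun _ => g) (s := fun _ => sset)
        (fun _ _ => hgl) hP₁c hP₁d hP₁s hP₂c hP₂d hP₂s hinit
    have hbmem : b ∈ Set.Icc x₀ b := ⟨hx₀i.2.le, le_refl _⟩
    have := huniq hbmem
    rw [hP₁, hP₂] at this
    have : u₁ b = u₂ b := congrArg Prod.snd this
    rw [hb1r, hb2r] at this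
    linarith
  · -- strictly positive minimum: conclude
    have h0mem : (0:ℝ) ∈ Set.Icc a b := by
      rw [Set.mem_Icc, ha, hbdef]
      constructor <;> linarith
    have := hmin 0 h0mem
    rw [hw] at *
    simp only at this hlt
    linarith
end

section
/- Let σ > 0 and 0 < L_1 < L_2, and suppose for k = 1, 2 that φ_k : [−L_k/2, L_k/2] → ℝ is a twice continuously differentiable solution of φ_k″ + f(φ_k) = 0 with φ_k′(−L_k/2) = −σ and φ_k′(L_k/2) = σ. Then φ_2(0) < φ_1(0); that is, the midpoint potential α = φ(0) of the symmetric Neumann problem is strictly decreasing in the plate separation L. -/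
open Real Filter Set Topology

/-- Antiderivative of `f`. -/
noncomputable def Fa (f : ℝ → ℝ) : ℝ → ℝ := fun p => ∫ t in (0:ℝ)..p, f t

section Basics

variable {f f' : ℝ → ℝ}
  (hd : ∀ p, HasDerivAt f (f' p) p) (hneg : ∀ p, f' p < 0) (hcont : Continuous f')

include hd in
lemma fcont : Continuous f := by
  have : Differentiable ℝ f := fun p => (hd p).differentiableAt
  exact this.continuous

include hd hneg in
lemma fanti : StrictAnti f :=
  strictAnti_of_deriv_neg fun x => by rw [(hd x).deriv]; exact hneg x

include hd in
lemma hasDerivAt_Fa (p : ℝ) : HasDerivAt (Fa f) (f p) p :=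
  ((fcont hd).integral_hasStrictDerivAt 0 p).hasDerivAt

include hd in
lemma Fa_cont : Continuous (Fa f) := by
  have : Differentiable ℝ (Fa f) := fun p => (hasDerivAt_Fa hd p).differentiableAt
  exact this.continuous

include hd hneg in
/-- `Fa` is strictly decreasing to the right of any point where `f < 0`. -/
lemma Fa_anti {p : ℝ} (hp : f p < 0) : StrictAntiOn (Fa f) (Ici p) := by
  apply strictAntiOn_of_deriv_neg (convex_Ici p) (Fa_cont hd).continuousOn
  intro x hx
  rw [interior_Ici] at hx
  rw [(hasDerivAt_Fa hd x).deriv]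
  exact lt_of_lt_of_le (fanti hd hneg hx) hp.le

include hd hneg in
/-- `Fa` has a strict global max at any zero of `f`. -/
lemma Fa_max {s t : ℝ} (hs : f s = 0) (hts : t ≠ s) : Fa f t < Fa f s := by
  rcases lt_or_gt_of_ne hts with h | h
  · have hm : StrictMonoOn (Fa f) (Iic s) := by
      apply strictMonoOn_of_deriv_pos (convex_Iic s) (Fa_cont hd).continuousOn
      intro x hx
      rw [interior_Iic] at hx
      rw [(hasDerivAt_Fa hd x).deriv]
      have := fanti hd hneg hx
      rw [hs] at this; linarith
    exact hm (le_of_lt h) (le_refl s) h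
  · have hm : StrictAntiOn (Fa f) (Ici s) := by
      apply strictAntiOn_of_deriv_neg (convex_Ici s) (Fa_cont hd).continuousOn
      intro x hx
      rw [interior_Ici] at hx
      rw [(hasDerivAt_Fa hd x).deriv]
      have := fanti hd hneg hx
      rw [hs] at this; linarith
    exact hm (le_refl s) h.le h

include hd hneg in
/-- `Fa` is injective among points where `f < 0`. -/
lemma Fa_inj {p q : ℝ} (hp : f p < 0) (hq : f q < 0) (h : Fa f p = Fa f q) : p = q := by
  rcases lt_trichotomy p q with hlt | he | hgt
  · exact absurd (Fa_anti hd hneg hp (le_refl p) hlt.le hlt) (by rw [h]; exact lt_irrefl _)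
  · exact he
  · exact absurd (Fa_anti hd hneg hq (le_refl q) hgt.le hgt) (by rw [h]; exact lt_irrefl _)

include hd in
/-- Lipschitz bound for `f` on an interval, given a bound on `f'`. -/
lemma f_lip {A B C : ℝ} (hC : ∀ t ∈ Icc A B, |f' t| ≤ C)
    {p q : ℝ} (hp : p ∈ Icc A B) (hq : q ∈ Icc A B) : |f p - f q| ≤ C * |p - q| := by
  rcases le_total q p with hqp | hpq
  · have := norm_image_sub_le_of_norm_deriv_le_segment'
      (f' := f') (fun x hx => (hd x).hasDerivWithinAt) (C := C)
      (fun x hx => hC x ⟨le_trans hq.1 hx.1, le_trans hx.2.le hp.2⟩) p (right_mem_Icc.2 hqp)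
    simpa [Real.norm_eq_abs, abs_sub_comm q p] using this.trans
      (le_of_eq (by rw [abs_of_nonneg (by linarith : (0:ℝ) ≤ p - q)]))
  · have := norm_image_sub_le_of_norm_deriv_le_segment'
      (f' := f') (fun x hx => (hd x).hasDerivWithinAt) (C := C)
      (fun x hx => hC x ⟨le_trans hp.1 hx.1, le_trans hx.2.le hq.2⟩) q (right_mem_Icc.2 hpq)
    rw [abs_sub_comm]
    simpa [Real.norm_eq_abs, abs_sub_comm p q] using this.trans
      (le_of_eq (by rw [abs_of_nonneg (by linarith : (0:ℝ) ≤ q - p)]))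

end Basics

section VLip


variable {f f' : ℝ → ℝ}

/-- Lipschitz property of the planar vector field `(φ,u) ↦ (u, -f(φ))` on a strip. -/
lemma v_lip (hd : ∀ p, HasDerivAt f (f' p) p) {R C : ℝ} (hR : 0 ≤ R) (hC1 : 0 ≤ C)
    (hC : ∀ t ∈ Icc (-R) R, |f' t| ≤ C) :
    LipschitzOnWith (Real.toNNReal (max 1 C)) (fun p : ℝ × ℝ => (p.2, -(f p.1)))
      (Icc (-R) R ×ˢ (univ : Set ℝ)) := by
  rw [lipschitzOnWith_iff_dist_le_mul]
  intro p hp q hq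
  rw [mem_prod] at hp hq
  have hco : (Real.toNNReal (max 1 C) : ℝ) = max 1 C :=
    Real.coe_toNNReal _ (le_trans zero_le_one (le_max_left _ _))
  rw [hco, Prod.dist_eq, Prod.dist_eq]
  have hd1 : dist p.1 q.1 ≤ max (dist p.1 q.1) (dist p.2 q.2) := le_max_left _ _
  have hd2 : dist p.2 q.2 ≤ max (dist p.1 q.1) (dist p.2 q.2) := le_max_right _ _
  have hdn : (0:ℝ) ≤ max (dist p.1 q.1) (dist p.2 q.2) :=
    le_trans dist_nonneg hd1
  apply max_le
  · calc dist p.2 q.2 ≤ 1 * max (dist p.1 q.1) (dist p.2 q.2) := by linarith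
    _ ≤ max 1 C * max (dist p.1 q.1) (dist p.2 q.2) :=
        mul_le_mul_of_nonneg_right (le_max_left _ _) hdn
  · have : dist (-(f p.1)) (-(f q.1)) = |f p.1 - f q.1| := by
      rw [dist_neg_neg, Real.dist_eq]
    rw [this]
    calc |f p.1 - f q.1| ≤ C * |p.1 - q.1| := f_lip hd hC hp.1 hq.1
    _ ≤ max 1 C * max (dist p.1 q.1) (dist p.2 q.2) := by
          rw [← Real.dist_eq] at *
          exact mul_le_mul (le_max_right _ _) hd1 dist_nonneg (le_trans hC1 (le_max_right _ _))

end VLip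

section Master

variable {f f' : ℝ → ℝ}

/-- Master structure lemma for solutions of the symmetric Neumann PB problem. -/
lemma sol_facts (hd : ∀ p, HasDerivAt f (f' p) p) (hneg : ∀ p, f' p < 0)
    (hcont : Continuous f') {ℓ σ : ℝ} (hℓ : 0 < ℓ) (hσ : 0 < σ) {φ u : ℝ → ℝ}
    (hsol : ∀ x ∈ Icc (-ℓ) ℓ, HasDerivWithinAt φ (u x) (Icc (-ℓ) ℓ) x ∧
      HasDerivWithinAt u (-(f (φ x))) (Icc (-ℓ) ℓ) x)
    (hua : u (-ℓ) = -σ) (hub : u ℓ = σ) :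
    u 0 = 0 ∧ (∀ x ∈ Icc (-ℓ) ℓ, φ 0 ≤ φ x ∧ φ x ≤ φ ℓ) ∧
    (∀ x ∈ Icc (-ℓ) ℓ, u x ^ 2 / 2 + Fa f (φ x) = Fa f (φ 0)) ∧
    (∀ x ∈ Icc (-ℓ) ℓ, f (φ x) < 0) ∧ StrictMonoOn u (Icc (-ℓ) ℓ) := by
  have hl : -ℓ < ℓ := by linarith
  have hlm : -ℓ ∈ Icc (-ℓ) ℓ := ⟨le_refl _, hl.le⟩
  have hrm : ℓ ∈ Icc (-ℓ) ℓ := ⟨hl.le, le_refl _⟩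
  have h0m : (0:ℝ) ∈ Icc (-ℓ) ℓ := ⟨by linarith, hℓ.le⟩
  have hφc : ContinuousOn φ (Icc (-ℓ) ℓ) := fun x hx => ((hsol x hx).1).continuousWithinAt
  have huc : ContinuousOn u (Icc (-ℓ) ℓ) := fun x hx => ((hsol x hx).2).continuousWithinAt
  have hφ' : ∀ x ∈ Ioo (-ℓ) ℓ, HasDerivAt φ (u x) x := fun x hx =>
    ((hsol x (mem_Icc_of_Ioo hx)).1).hasDerivAt (Icc_mem_nhds hx.1 hx.2)
  have hu' : ∀ x ∈ Ioo (-ℓ) ℓ, HasDerivAt u (-(f (φ x))) x := fun x hx =>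
    ((hsol x (mem_Icc_of_Ioo hx)).2).hasDerivAt (Icc_mem_nhds hx.1 hx.2)
  -- energy conservation
  have hE : ∀ x ∈ Icc (-ℓ) ℓ, u x ^ 2 / 2 + Fa f (φ x) = u (-ℓ) ^ 2 / 2 + Fa f (φ (-ℓ)) := by
    apply constant_of_has_deriv_right_zero
    · exact ((huc.pow 2).div_const 2).add ((Fa_cont hd).comp_continuousOn hφc)
    · intro x hx
      have hx' : x ∈ Icc (-ℓ) ℓ := mem_Icc_of_Ico hx
      have h1 := (hsol x hx').1
      have h2 := (hsol x hx').2
      have hD : HasDerivWithinAt (fun y => u y ^ 2 / 2 + Fa f (φ y))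
          ((2:ℕ) * u x ^ 1 * (-(f (φ x))) / 2 + f (φ x) * u x) (Icc (-ℓ) ℓ) x :=
        ((h2.pow 2).div_const 2).add ((hasDerivAt_Fa hd (φ x)).comp_hasDerivWithinAt x h1)
      have h0 : ((2:ℕ) : ℝ) * u x ^ 1 * (-(f (φ x))) / 2 + f (φ x) * u x = 0 := by
        push_cast; ring
      rw [h0] at hD
      exact hD.mono_of_mem_nhdsWithin (Icc_mem_nhdsGE_of_mem hx)
  have hEE : ∀ x ∈ Icc (-ℓ) ℓ, ∀ y ∈ Icc (-ℓ) ℓ,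
      u x ^ 2 / 2 + Fa f (φ x) = u y ^ 2 / 2 + Fa f (φ y) := fun x hx y hy =>
    (hE x hx).trans (hE y hy).symm
  -- a zero of u
  have hIVTu : ∃ x₀ ∈ Icc (-ℓ) ℓ, u x₀ = 0 := by
    have hsub := intermediate_value_Icc hl.le huc
    have : (0:ℝ) ∈ Icc (u (-ℓ)) (u ℓ) := by rw [hua, hub]; constructor <;> linarith
    obtain ⟨x₀, hx₀, hux₀⟩ := hsub this
    exact ⟨x₀, hx₀, hux₀⟩
  obtain ⟨x₀, hx₀m, hux₀⟩ := hIVTu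
  -- a point where f ∘ φ < 0
  have hx₂ : ∃ x₂ ∈ Icc (-ℓ) ℓ, f (φ x₂) < 0 := by
    obtain ⟨x₂, hx₂, hs⟩ := exists_hasDerivAt_eq_slope u (fun x => -(f (φ x))) hl huc hu'
    refine ⟨x₂, mem_Icc_of_Ioo hx₂, ?_⟩
    rw [hua, hub] at hs
    have hpos : (σ - -σ) / (ℓ - -ℓ) > 0 := by
      apply div_pos <;> linarith
    linarith [hs ▸ hpos]
  obtain ⟨x₂, hx₂m, hfx₂⟩ := hx₂
  -- bounds for the Lipschitz set
  obtain ⟨R, hR⟩ := (isCompact_Icc (a := -ℓ) (b := ℓ)).exists_bound_of_continuousOn hφc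
  have hR0 : 0 ≤ R := le_trans (norm_nonneg _) (hR ℓ hrm)
  obtain ⟨C, hC⟩ := (isCompact_Icc (a := -R) (b := R)).exists_bound_of_continuousOn
    hcont.continuousOn
  have hC0 : 0 ≤ C := le_trans (norm_nonneg _) (hC 0 ⟨by linarith, hR0⟩)
  have hC' : ∀ t ∈ Icc (-R) R, |f' t| ≤ C := fun t ht => hC t ht
  have hlip := v_lip hd hR0 hC0 hC'
  have hφmem : ∀ x ∈ Icc (-ℓ) ℓ, φ x ∈ Icc (-R) R := fun x hx => by
    have := hR x hx; rw [Real.norm_eq_abs] at this; exact abs_le.mp this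
  -- no interior equilibrium on the trajectory
  have hequil : ∀ y ∈ Icc (-ℓ) ℓ, u y = 0 → f (φ y) = 0 → False := by
    intro y hy huy hfy
    have key : EqOn (fun x => (φ x, u x)) (fun _ => ((φ y, 0) : ℝ × ℝ)) (Icc y ℓ) := by
      apply ODE_solution_unique_of_mem_Icc_right
        (v := fun _ (p : ℝ × ℝ) => ((p.2, -(f p.1)) : ℝ × ℝ))
        (s := fun _ => Icc (-R) R ×ˢ (univ : Set ℝ)) (fun _ _ => hlip)
      · exact ((hφc.mono (Icc_subset_Icc hy.1 le_rfl)).prodMk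
          (huc.mono (Icc_subset_Icc hy.1 le_rfl)))
      · intro t ht
        have ht' : t ∈ Icc (-ℓ) ℓ := ⟨le_trans hy.1 ht.1, ht.2.le⟩
        exact ((hsol t ht').1.prodMk (hsol t ht').2).mono_of_mem_nhdsWithin
          (Icc_mem_nhdsGE_of_mem ⟨le_trans hy.1 ht.1, ht.2⟩)
      · intro t ht
        exact mem_prod.mpr ⟨hφmem t ⟨le_trans hy.1 ht.1, ht.2.le⟩, mem_univ _⟩
      · exact continuousOn_const
      · intro t ht
        have : ((0:ℝ), (0:ℝ)) = ((((φ y, 0) : ℝ × ℝ).2, -(f ((φ y, 0) : ℝ × ℝ).1)) : ℝ × ℝ) := by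
          simp [hfy]
        exact this ▸ hasDerivWithinAt_const t _ _
      · intro t ht
        exact mem_prod.mpr ⟨hφmem y hy, mem_univ _⟩
      · simp [huy]
    have := key (right_mem_Icc.mpr hy.2)
    simp only [Prod.mk.injEq] at this
    rw [hub] at this
    linarith [this.2]
  -- f ∘ φ < 0 everywhere
  have hfφ : ∀ x ∈ Icc (-ℓ) ℓ, f (φ x) < 0 := by
    intro x₁ hx₁m
    by_contra hcon
    push_neg at hcon
    -- φ x₁ < φ x₂
    have hlt : φ x₁ < φ x₂ := by
      by_contra hge
      push_neg at hge
      have := (fanti hd hneg).antitone hge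
      linarith
    -- a zero of f between φ x₁ and φ x₂
    have hzero : ∃ p ∈ Icc (φ x₁) (φ x₂), f p = 0 := by
      have hsub := intermediate_value_Icc' hlt.le ((fcont hd).continuousOn)
      have : (0:ℝ) ∈ Icc (f (φ x₂)) (f (φ x₁)) := ⟨hfx₂.le, hcon⟩
      obtain ⟨p, hp, hfp⟩ := hsub this
      exact ⟨p, hp, hfp⟩
    obtain ⟨p, hpm, hfp⟩ := hzero
    -- a point x₃ with φ x₃ = p
    have hx₃ : ∃ x₃ ∈ uIcc x₁ x₂, φ x₃ = p := by
      have hsub := intermediate_value_uIcc (hφc.mono (uIcc_subset_Icc hx₁m hx₂m))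
      have : p ∈ uIcc (φ x₁) (φ x₂) := by
        rw [uIcc_of_le hlt.le]; exact hpm
      obtain ⟨x₃, hx₃, hφx₃⟩ := hsub this
      exact ⟨x₃, hx₃, hφx₃⟩
    obtain ⟨x₃, hx₃m, hφx₃⟩ := hx₃
    have hx₃m' : x₃ ∈ Icc (-ℓ) ℓ := uIcc_subset_Icc hx₁m hx₂m hx₃m
    by_cases hpe : φ x₀ = p
    · exact hequil x₀ hx₀m hux₀ (by rw [hpe, hfp])
    · have hmax : Fa f (φ x₀) < Fa f p := Fa_max hd hneg hfp hpe
      have h1 := hEE x₃ hx₃m' x₀ hx₀m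
      rw [hux₀, hφx₃] at h1
      nlinarith [sq_nonneg (u x₃)]
  -- u strictly monotone
  have humono : StrictMonoOn u (Icc (-ℓ) ℓ) := by
    apply strictMonoOn_of_deriv_pos (convex_Icc _ _) huc
    intro x hx
    rw [interior_Icc] at hx
    rw [(hu' x hx).deriv]
    linarith [hfφ x (mem_Icc_of_Ioo hx)]
  -- endpoint symmetry
  have hends : φ (-ℓ) = φ ℓ := by
    have h1 := hEE (-ℓ) hlm ℓ hrm
    rw [hua, hub] at h1
    have h2 : Fa f (φ (-ℓ)) = Fa f (φ ℓ) := by nlinarith [h1]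
    exact Fa_inj hd hneg (hfφ _ hlm) (hfφ _ hrm) h2
  -- symmetry of the solution: u 0 = 0
  have hu0 : u 0 = 0 := by
    have hmaps : MapsTo (fun x : ℝ => -x) (Icc (-ℓ) ℓ) (Icc (-ℓ) ℓ) := fun x hx =>
      ⟨by simpa using neg_le_neg hx.2, by simpa using neg_le_neg hx.1⟩
    have hnegc : ContinuousOn (fun x : ℝ => -x) (Icc (-ℓ) ℓ) := continuousOn_neg
    have key : EqOn (fun x => (φ x, u x)) (fun x => ((φ (-x), -u (-x)) : ℝ × ℝ))
        (Icc (-ℓ) ℓ) := by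
      apply ODE_solution_unique_of_mem_Icc_left
        (v := fun _ (p : ℝ × ℝ) => ((p.2, -(f p.1)) : ℝ × ℝ))
        (s := fun _ => Icc (-R) R ×ˢ (univ : Set ℝ)) (fun _ _ => hlip)
      · exact hφc.prodMk huc
      · intro t ht
        have ht' : t ∈ Icc (-ℓ) ℓ := ⟨ht.1.le, ht.2⟩
        exact ((hsol t ht').1.prodMk (hsol t ht').2).mono_of_mem_nhdsWithin
          (Icc_mem_nhdsLE_of_mem ht)
      · intro t ht
        exact mem_prod.mpr ⟨hφmem t ⟨ht.1.le, ht.2⟩, mem_univ _⟩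
      · exact ((hφc.comp hnegc hmaps).prodMk ((huc.comp hnegc hmaps).neg))
      · intro t ht
        have ht' : t ∈ Icc (-ℓ) ℓ := ⟨ht.1.le, ht.2⟩
        have htm : -t ∈ Icc (-ℓ) ℓ := hmaps ht'
        have hnegd : HasDerivWithinAt (fun x : ℝ => -x) (-1) (Icc (-ℓ) ℓ) t :=
          (hasDerivAt_neg t).hasDerivWithinAt
        have h1 : HasDerivWithinAt (fun x => φ (-x)) (u (-t) * (-1)) (Icc (-ℓ) ℓ) t :=
          HasDerivWithinAt.comp t (hsol (-t) htm).1 hnegd hmaps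
        have h2 : HasDerivWithinAt (fun x => u (-x)) (-(f (φ (-t))) * (-1)) (Icc (-ℓ) ℓ) t :=
          HasDerivWithinAt.comp t (hsol (-t) htm).2 hnegd hmaps
        have h12 : HasDerivWithinAt (fun x => ((φ (-x), -u (-x)) : ℝ × ℝ))
            ((u (-t) * (-1), -(-(f (φ (-t))) * (-1)))) (Icc (-ℓ) ℓ) t := h1.prodMk h2.neg
        have heq : ((u (-t) * (-1), -(-(f (φ (-t))) * (-1))) : ℝ × ℝ) =
            ((-u (-t), -(f (φ (-t)))) : ℝ × ℝ) := by
          simp only [Prod.mk.injEq]; constructor <;> ring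
        rw [heq] at h12
        exact h12.mono_of_mem_nhdsWithin (Icc_mem_nhdsLE_of_mem ht)
      · intro t ht
        have ht' : t ∈ Icc (-ℓ) ℓ := ⟨ht.1.le, ht.2⟩
        exact mem_prod.mpr ⟨hφmem (-t) (hmaps ht'), mem_univ _⟩
      · have : -ℓ = -ℓ := rfl
        simp only [Prod.mk.injEq]
        constructor
        · rw [← hends]
        · rw [hub, hua]; ring
    have := key h0m
    simp only [neg_zero, Prod.mk.injEq] at this
    linarith [this.2]
  -- monotonicity of φ on the two halves
  have hmono2 : ∀ x ∈ Icc (-ℓ) ℓ, φ 0 ≤ φ x ∧ φ x ≤ φ ℓ := by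
    have hsubR : Icc (0:ℝ) ℓ ⊆ Icc (-ℓ) ℓ := Icc_subset_Icc (by linarith) le_rfl
    have hsubL : Icc (-ℓ) (0:ℝ) ⊆ Icc (-ℓ) ℓ := Icc_subset_Icc le_rfl (by linarith)
    have hmR : MonotoneOn φ (Icc 0 ℓ) := by
      apply monotoneOn_of_deriv_nonneg (convex_Icc _ _) (hφc.mono hsubR)
      · intro x hx
        rw [interior_Icc] at hx
        have hx' : x ∈ Ioo (-ℓ) ℓ := ⟨by linarith [hx.1], hx.2⟩
        exact (hφ' x hx').differentiableAt.differentiableWithinAt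
      · intro x hx
        rw [interior_Icc] at hx
        have hx' : x ∈ Ioo (-ℓ) ℓ := ⟨by linarith [hx.1], hx.2⟩
        rw [(hφ' x hx').deriv]
        have := humono h0m (mem_Icc_of_Ioo hx') hx.1
        linarith [hu0 ▸ this]
    have hmL : AntitoneOn φ (Icc (-ℓ) 0) := by
      apply antitoneOn_of_deriv_nonpos (convex_Icc _ _) (hφc.mono hsubL)
      · intro x hx
        rw [interior_Icc] at hx
        have hx' : x ∈ Ioo (-ℓ) ℓ := ⟨hx.1, by linarith [hx.2]⟩
        exact (hφ' x hx').differentiableAt.differentiableWithinAt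
      · intro x hx
        rw [interior_Icc] at hx
        have hx' : x ∈ Ioo (-ℓ) ℓ := ⟨hx.1, by linarith [hx.2]⟩
        rw [(hφ' x hx').deriv]
        have := humono (mem_Icc_of_Ioo hx') h0m hx.2
        linarith [hu0 ▸ this]
    intro x hx
    rcases le_total x 0 with hx0 | hx0
    · have hxm : x ∈ Icc (-ℓ) (0:ℝ) := ⟨hx.1, hx0⟩
      constructor
      · exact hmL hxm ⟨by linarith, le_rfl⟩ hx0
      · calc φ x ≤ φ (-ℓ) := hmL ⟨le_rfl, by linarith⟩ hxm hx.1
          _ = φ ℓ := hends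
    · have hxm : x ∈ Icc (0:ℝ) ℓ := ⟨hx0, hx.2⟩
      exact ⟨hmR ⟨le_rfl, hℓ.le⟩ hxm hx0, hmR hxm ⟨hℓ.le, le_rfl⟩ hx.2⟩
  refine ⟨hu0, hmono2, ?_, hfφ, humono⟩
  intro x hx
  have := hEE x hx 0 h0m
  rw [hu0] at this
  rw [this]; ring

end Master

lemma mono_range {w : ℝ → ℝ} {a b : ℝ} (hm : StrictMonoOn w (Icc a b)) (hab : a ≤ b) :
    ∀ x ∈ Icc a b, w x ∈ Icc (w a) (w b) := fun x hx =>
  ⟨hm.monotoneOn (left_mem_Icc.2 hab) hx hx.1, hm.monotoneOn hx (right_mem_Icc.2 hab) hx.2⟩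

/-- The midpoint potential `α = φ(0)` of the symmetric Neumann problem is
strictly decreasing in the plate separation `L`: if `σ > 0`, `0 < L₁ < L₂` and `φ₁, φ₂`
solve the problem on `[-L₁/2, L₁/2]`, `[-L₂/2, L₂/2]` respectively, then `φ₂(0) < φ₁(0)`. -/
theorem stmt10 {N : ℕ} (hN : 1 ≤ N) (z c : Fin N → ℝ)
    (hz : ∀ j, z j ≠ 0) (hc : ∀ j, 0 < c j) (q0 : ℝ)
    (f : ℝ → ℝ)
    (hf : ∀ φ : ℝ, f φ = q0 + ∑ j, z j * c j * Real.exp (-(z j) * φ))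
    (σ : ℝ) (hσ : 0 < σ) (L₁ L₂ : ℝ) (hL₁ : 0 < L₁) (hL : L₁ < L₂)
    (φ₁ u₁ φ₂ u₂ : ℝ → ℝ)
    (h₁ : IsPBSol f (-(L₁ / 2)) (L₁ / 2) φ₁ u₁)
    (hb₁ : u₁ (-(L₁ / 2)) = -σ ∧ u₁ (L₁ / 2) = σ)
    (h₂ : IsPBSol f (-(L₂ / 2)) (L₂ / 2) φ₂ u₂)
    (hb₂ : u₂ (-(L₂ / 2)) = -σ ∧ u₂ (L₂ / 2) = σ) :
    φ₂ 0 < φ₁ 0 := by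
  have hfe : f = fun p => q0 + ∑ j, z j * c j * Real.exp (-(z j) * p) := funext hf
  subst hfe
  set f : ℝ → ℝ := fun p => q0 + ∑ j, z j * c j * Real.exp (-(z j) * p) with hfdef
  set f' : ℝ → ℝ := fun p => ∑ j, z j * c j * (Real.exp (-(z j) * p) * (-(z j) * 1))
    with hf'def
  have hd : ∀ p, HasDerivAt f (f' p) p := by
    intro p
    apply HasDerivAt.const_add
    apply HasDerivAt.fun_sum
    intro j _
    exact (((hasDerivAt_id p).const_mul (-(z j))).exp).const_mul (z j * c j)
  have hneg : ∀ p, f' p < 0 := by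
    intro p
    have hne : (Finset.univ : Finset (Fin N)).Nonempty := ⟨⟨0, hN⟩, Finset.mem_univ _⟩
    have h1 : ∀ j ∈ (Finset.univ : Finset (Fin N)),
        z j * c j * (Real.exp (-(z j) * p) * (-(z j) * 1)) < 0 := by
      intro j _
      have hz2 : 0 < z j ^ 2 := by
        have := hz j
        positivity
      have he : 0 < Real.exp (-(z j) * p) := Real.exp_pos _
      have key : z j * c j * (Real.exp (-(z j) * p) * (-(z j) * 1)) =
          -(z j ^ 2 * c j * Real.exp (-(z j) * p)) := by ring
      rw [key]
      have := mul_pos (mul_pos hz2 (hc j)) he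
      linarith
    calc f' p < ∑ _j : Fin N, (0:ℝ) := Finset.sum_lt_sum_of_nonempty hne h1
      _ = 0 := by simp
  have hcont : Continuous f' := by fun_prop
  -- instantiate the master lemma for both solutions
  have hl1 : (0:ℝ) < L₁ / 2 := by linarith
  have hl2 : (0:ℝ) < L₂ / 2 := by linarith
  obtain ⟨hu10, hb1, hE1, hf1, hm1⟩ :=
    sol_facts hd hneg hcont hl1 hσ (fun x hx => h₁ x hx) hb₁.1 hb₁.2
  obtain ⟨hu20, hb2, hE2, hf2, hm2⟩ :=
    sol_facts hd hneg hcont hl2 hσ (fun x hx => h₂ x hx) hb₂.1 hb₂.2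
  set ℓ₁ := L₁ / 2
  set ℓ₂ := L₂ / 2
  have hll : ℓ₁ < ℓ₂ := by simp only [ℓ₁, ℓ₂]; linarith
  have hl1m : -ℓ₁ ∈ Icc (-ℓ₁) ℓ₁ := ⟨le_rfl, by linarith⟩
  have hr1m : ℓ₁ ∈ Icc (-ℓ₁) ℓ₁ := ⟨by linarith, le_rfl⟩
  have h01m : (0:ℝ) ∈ Icc (-ℓ₁) ℓ₁ := ⟨by linarith, by linarith⟩
  have h02m : (0:ℝ) ∈ Icc (-ℓ₂) ℓ₂ := ⟨by linarith, by linarith⟩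
  -- continuity
  have hφ₁c : ContinuousOn φ₁ (Icc (-ℓ₁) ℓ₁) := fun x hx => (h₁ x hx).1.continuousWithinAt
  have hu₁c : ContinuousOn u₁ (Icc (-ℓ₁) ℓ₁) := fun x hx => (h₁ x hx).2.continuousWithinAt
  have hφ₂c : ContinuousOn φ₂ (Icc (-ℓ₂) ℓ₂) := fun x hx => (h₂ x hx).1.continuousWithinAt
  have hu₂c : ContinuousOn u₂ (Icc (-ℓ₂) ℓ₂) := fun x hx => (h₂ x hx).2.continuousWithinAt
  have hu₂' : ∀ x ∈ Ioo (-ℓ₂) ℓ₂, HasDerivAt u₂ (-(f (φ₂ x))) x := fun x hx =>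
    (h₂ x (mem_Icc_of_Ioo hx)).2.hasDerivAt (Icc_mem_nhds hx.1 hx.2)
  have hu₁' : ∀ x ∈ Ioo (-ℓ₁) ℓ₁, HasDerivAt u₁ (-(f (φ₁ x))) x := fun x hx =>
    (h₁ x (mem_Icc_of_Ioo hx)).2.hasDerivAt (Icc_mem_nhds hx.1 hx.2)
  -- ranges of u
  have hu1r : ∀ x ∈ Icc (-ℓ₁) ℓ₁, u₁ x ∈ Icc (-σ) σ := by
    intro x hx
    have := mono_range hm1 (by linarith) x hx
    rwa [hb₁.1, hb₁.2] at this
  have hu2r : ∀ x ∈ Icc (-ℓ₂) ℓ₂, u₂ x ∈ Icc (-σ) σ := by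
    intro x hx
    have := mono_range hm2 (by linarith) x hx
    rwa [hb₂.1, hb₂.2] at this
  -- suppose the conclusion fails
  by_contra hcon
  push_neg at hcon
  -- energies compare
  have hf10 : f (φ₁ 0) < 0 := hf1 0 h01m
  have hf20 : f (φ₂ 0) < 0 := hf2 0 h02m
  have hE21 : Fa f (φ₂ 0) ≤ Fa f (φ₁ 0) := by
    rcases eq_or_lt_of_le hcon with he | hlt
    · rw [he]
    · exact (Fa_anti hd hneg hf10 (self_mem_Ici) (le_of_lt (by exact hlt)) hlt).le
  -- the inverse of u₁
  have hs_ex : ∀ s ∈ Icc (-σ) σ, ∃ x ∈ Icc (-ℓ₁) ℓ₁, u₁ x = s := by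
    intro s hs
    have hsub := intermediate_value_Icc (by linarith : -ℓ₁ ≤ ℓ₁) hu₁c
    have : s ∈ Icc (u₁ (-ℓ₁)) (u₁ ℓ₁) := by rw [hb₁.1, hb₁.2]; exact hs
    obtain ⟨x, hx, hux⟩ := hsub this
    exact ⟨x, hx, hux⟩
  choose! X₁ hX₁m hX₁v using hs_ex
  have hΦid : ∀ x ∈ Icc (-ℓ₁) ℓ₁, φ₁ (X₁ (u₁ x)) = φ₁ x := by
    intro x hx
    have hsx := hu1r x hx
    have := hm1.injOn (hX₁m _ hsx) hx (hX₁v _ hsx)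
    rw [this]
  have hFΦ : ∀ s ∈ Icc (-σ) σ, Fa f (φ₁ (X₁ s)) = Fa f (φ₁ 0) - s ^ 2 / 2 := by
    intro s hs
    have := hE1 (X₁ s) (hX₁m _ hs)
    rw [hX₁v _ hs] at this
    linarith
  have hΦmem : ∀ s ∈ Icc (-σ) σ, φ₁ (X₁ s) ∈ Icc (φ₁ 0) (φ₁ ℓ₁) := fun s hs =>
    ⟨(hb1 _ (hX₁m _ hs)).1, (hb1 _ (hX₁m _ hs)).2⟩
  -- quantitative bounds
  set m := -(f (φ₁ 0)) with hmdef
  have hm0 : 0 < m := by simp only [hmdef]; linarith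
  have hflow : ∀ t ∈ Icc (φ₁ 0) (φ₁ ℓ₁), f t ≤ -m := by
    intro t ht
    have := (fanti hd hneg).antitone ht.1
    simp only [hmdef]; linarith
  -- Lipschitz bound for Φ₁ := φ₁ ∘ X₁
  have hΦlip : ∀ s ∈ Icc (-σ) σ, ∀ t ∈ Icc (-σ) σ,
      φ₁ (X₁ s) - φ₁ (X₁ t) ≤ σ / m * |s - t| := by
    intro s hs t ht
    rcases le_or_gt (φ₁ (X₁ s)) (φ₁ (X₁ t)) with hle | hgt
    · have : (0:ℝ) ≤ σ / m * |s - t| := by positivity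
      linarith
    · obtain ⟨ξ, hξ, hslope⟩ := exists_hasDerivAt_eq_slope (Fa f) f hgt
        (Fa_cont hd).continuousOn (fun r _ => hasDerivAt_Fa hd r)
      have hξm : ξ ∈ Icc (φ₁ 0) (φ₁ ℓ₁) :=
        ⟨le_trans (hΦmem t ht).1 hξ.1.le, le_trans hξ.2.le (hΦmem s hs).2⟩
      have hfξ : f ξ ≤ -m := hflow ξ hξm
      have hFdiff : Fa f (φ₁ (X₁ s)) - Fa f (φ₁ (X₁ t)) = (t ^ 2 - s ^ 2) / 2 := by
        rw [hFΦ s hs, hFΦ t ht]; ring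
      have hden : (0:ℝ) < φ₁ (X₁ s) - φ₁ (X₁ t) := by linarith
      have hmul : Fa f (φ₁ (X₁ s)) - Fa f (φ₁ (X₁ t)) = f ξ * (φ₁ (X₁ s) - φ₁ (X₁ t)) := by
        rw [eq_div_iff hden.ne'] at hslope
        linarith [hslope]
      have hst2 : s ^ 2 - t ^ 2 ≤ |s - t| * (2 * σ) := by
        have h1 : s ^ 2 - t ^ 2 = (s - t) * (s + t) := by ring
        have h2 : (s - t) * (s + t) ≤ |s - t| * |s + t| := by
          calc (s - t) * (s + t) ≤ |(s - t) * (s + t)| := le_abs_self _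
            _ = |s - t| * |s + t| := abs_mul _ _
        have h3 : |s + t| ≤ 2 * σ := by
          have h4 : |s| ≤ σ := abs_le.mpr ⟨hs.1, hs.2⟩
          have h5 : |t| ≤ σ := abs_le.mpr ⟨ht.1, ht.2⟩
          calc |s + t| ≤ |s| + |t| := abs_add_le _ _
            _ ≤ 2 * σ := by linarith
        calc s ^ 2 - t ^ 2 ≤ |s - t| * |s + t| := by linarith
          _ ≤ |s - t| * (2 * σ) := mul_le_mul_of_nonneg_left h3 (abs_nonneg _)
      -- from hmul : (t²-s²)/2 = f ξ * d ≤ -m d  ⇒  d ≤ (s²-t²)/(2m)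
      have hd1 : m * (φ₁ (X₁ s) - φ₁ (X₁ t)) ≤ (s ^ 2 - t ^ 2) / 2 := by
        have hmm : f ξ * (φ₁ (X₁ s) - φ₁ (X₁ t)) ≤ -m * (φ₁ (X₁ s) - φ₁ (X₁ t)) :=
          mul_le_mul_of_nonneg_right hfξ hden.le
        rw [← hmul, hFdiff] at hmm
        linarith [hmm]
      rw [div_mul_eq_mul_div, le_div_iff₀ hm0]
      calc (φ₁ (X₁ s) - φ₁ (X₁ t)) * m = m * (φ₁ (X₁ s) - φ₁ (X₁ t)) := by ring
        _ ≤ (s ^ 2 - t ^ 2) / 2 := hd1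
        _ ≤ |s - t| * (2 * σ) / 2 := by linarith
        _ = σ * |s - t| := by ring
  -- Lipschitz bound for f on the range
  obtain ⟨Cf, hCf⟩ := (isCompact_Icc (a := φ₁ 0) (b := φ₁ ℓ₁)).exists_bound_of_continuousOn
    hcont.continuousOn
  have hφ01 : φ₁ 0 ≤ φ₁ ℓ₁ := (hb1 ℓ₁ hr1m).1
  have hCf0 : 0 ≤ Cf := le_trans (norm_nonneg _) (hCf (φ₁ 0) ⟨le_rfl, hφ01⟩)
  set K := Cf * (σ / m) with hKdef
  have hK0 : 0 ≤ K := by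
    apply mul_nonneg hCf0
    positivity
  have hg₁lip : ∀ s ∈ Icc (-σ) σ, ∀ t ∈ Icc (-σ) σ,
      |f (φ₁ (X₁ s)) - f (φ₁ (X₁ t))| ≤ K * |s - t| := by
    intro s hs t ht
    have h1 : |f (φ₁ (X₁ s)) - f (φ₁ (X₁ t))| ≤ Cf * |φ₁ (X₁ s) - φ₁ (X₁ t)| :=
      f_lip hd (fun r hr => hCf r hr) (hΦmem s hs) (hΦmem t ht)
    have h2 : |φ₁ (X₁ s) - φ₁ (X₁ t)| ≤ σ / m * |s - t| := by
      rw [abs_sub_le_iff]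
      constructor
      · exact hΦlip s hs t ht
      · rw [abs_sub_comm]
        exact hΦlip t ht s hs
    calc |f (φ₁ (X₁ s)) - f (φ₁ (X₁ t))| ≤ Cf * (σ / m * |s - t|) :=
          h1.trans (mul_le_mul_of_nonneg_left h2 hCf0)
      _ = K * |s - t| := by rw [hKdef]; ring
  -- the shifted second trajectory
  set cs := ℓ₂ - ℓ₁ with hcsdef
  have hshift : ∀ x ∈ Icc (-ℓ₁) ℓ₁, x + cs ∈ Icc (-ℓ₂) ℓ₂ := by
    intro x hx
    constructor
    · have := hx.1; simp only [hcsdef]; linarith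
    · have := hx.2; simp only [hcsdef]; linarith
  -- key comparison at equal u-levels
  have hkey : ∀ x ∈ Icc (-ℓ₁) ℓ₁, f (φ₂ (x + cs)) ≤ f (φ₁ (X₁ (u₂ (x + cs)))) := by
    intro x hx
    have hxm2 : x + cs ∈ Icc (-ℓ₂) ℓ₂ := hshift x hx
    have hsm : u₂ (x + cs) ∈ Icc (-σ) σ := hu2r _ hxm2
    set s := u₂ (x + cs)
    have hFψ : Fa f (φ₂ (x + cs)) = Fa f (φ₂ 0) - s ^ 2 / 2 := by
      have := hE2 (x + cs) hxm2
      linarith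
    have hcomp : Fa f (φ₂ (x + cs)) ≤ Fa f (φ₁ (X₁ s)) := by
      rw [hFψ, hFΦ s hsm]
      linarith
    have hge : φ₁ (X₁ s) ≤ φ₂ (x + cs) := by
      by_contra hl'
      push_neg at hl'
      have hmem1 : φ₂ (x + cs) ∈ Ici (φ₁ 0) := by
        have h1 : φ₂ 0 ≤ φ₂ (x + cs) := (hb2 _ hxm2).1
        exact le_trans hcon h1
      have hmem2 : φ₁ (X₁ s) ∈ Ici (φ₁ 0) := (hΦmem s hsm).1
      have := Fa_anti hd hneg hf10 hmem1 hmem2 hl'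
      linarith
    exact (fanti hd hneg).antitone hge
  -- the difference function
  set w := fun x => u₂ (x + cs) - u₁ x with hwdef
  have hw_end : w ℓ₁ = 0 := by
    have harg : ℓ₁ + cs = ℓ₂ := by simp only [hcsdef]; ring
    simp only [hwdef, harg, hb₂.2, hb₁.2, sub_self]
  have hwc : ContinuousOn w (Icc (-ℓ₁) ℓ₁) := by
    apply ContinuousOn.sub _ hu₁c
    exact hu₂c.comp (Continuous.continuousOn (by fun_prop)) hshift
  -- main claim : w ≤ 0 at the left endpoint
  have hwneg : w (-ℓ₁) ≤ 0 := by
    by_contra hwpos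
    push_neg at hwpos
    set T := Icc (-ℓ₁) ℓ₁ ∩ w ⁻¹' (Iic 0) with hTdef
    have hTne : T.Nonempty := ⟨ℓ₁, hr1m, by
      rw [mem_preimage, hw_end]; exact self_mem_Iic⟩
    have hTc : IsClosed T := hwc.preimage_isClosed_of_isClosed isClosed_Icc isClosed_Iic
    have hTbdd : BddBelow T := ⟨-ℓ₁, fun y hy => hy.1.1⟩
    set x₂ := sInf T with hx₂def
    have hx₂T : x₂ ∈ T := hTc.csInf_mem hTne hTbdd
    have hx₂m : x₂ ∈ Icc (-ℓ₁) ℓ₁ := hx₂T.1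
    have hwx₂ : w x₂ ≤ 0 := hx₂T.2
    have hx₂gt : -ℓ₁ < x₂ := by
      rcases eq_or_lt_of_le hx₂m.1 with he | h
      · exfalso; rw [← he] at hwx₂; linarith
      · exact h
    have hposIco : ∀ y ∈ Ico (-ℓ₁) x₂, 0 < w y := by
      intro y hy
      by_contra hyn
      push_neg at hyn
      have hym : y ∈ T := ⟨⟨hy.1, le_trans hy.2.le hx₂m.2⟩, hyn⟩
      exact absurd (csInf_le hTbdd hym) (not_le.mpr hy.2)
    set W := fun y => Real.exp (K * y) * w y with hWdef
    have hWd : ∀ y ∈ Ioo (-ℓ₁) x₂, HasDerivAt W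
        (Real.exp (K * y) * K * w y +
          Real.exp (K * y) * (-(f (φ₂ (y + cs))) - -(f (φ₁ y)))) y := by
      intro y hy
      have hyI : y ∈ Ioo (-ℓ₁) ℓ₁ := ⟨hy.1, lt_of_lt_of_le hy.2 hx₂m.2⟩
      have hy2I : y + cs ∈ Ioo (-ℓ₂) ℓ₂ := by
        constructor
        · have := hy.1; simp only [hcsdef]; linarith
        · have := hyI.2; simp only [hcsdef] at this ⊢; linarith
      have hder_v : HasDerivAt (fun y => u₂ (y + cs)) (-(f (φ₂ (y + cs)))) y := by
        have h := hu₂' (y + cs) hy2I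
        have hshiftd : HasDerivAt (fun y : ℝ => y + cs) 1 y := (hasDerivAt_id y).add_const cs
        have := HasDerivAt.comp y h hshiftd
        simpa [Function.comp_def] using this
      have hder_w : HasDerivAt w (-(f (φ₂ (y + cs))) - -(f (φ₁ y))) y :=
        hder_v.sub (hu₁' y hyI)
      have h1 : HasDerivAt (fun t : ℝ => K * t) K y := by
        simpa using (hasDerivAt_id y).const_mul K
      have hexp : HasDerivAt (fun t : ℝ => Real.exp (K * t)) (Real.exp (K * y) * K) y :=
        h1.exp
      exact hexp.mul hder_w
    have hWmono : MonotoneOn W (Icc (-ℓ₁) x₂) := by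
      apply monotoneOn_of_deriv_nonneg (convex_Icc _ _)
      · exact (Real.continuous_exp.comp
          (continuous_const.mul continuous_id)).continuousOn.mul
          (hwc.mono (Icc_subset_Icc le_rfl hx₂m.2))
      · intro y hy
        rw [interior_Icc] at hy
        exact (hWd y hy).differentiableAt.differentiableWithinAt
      · intro y hy
        rw [interior_Icc] at hy
        rw [(hWd y hy).deriv]
        have hyI : y ∈ Icc (-ℓ₁) ℓ₁ := ⟨hy.1.le, le_trans hy.2.le hx₂m.2⟩
        have hwy : 0 < w y := hposIco y ⟨hy.1.le, hy.2⟩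
        have hsm : u₂ (y + cs) ∈ Icc (-σ) σ := hu2r _ (hshift y hyI)
        have htm : u₁ y ∈ Icc (-σ) σ := hu1r y hyI
        have hlipst := hg₁lip (u₂ (y + cs)) hsm (u₁ y) htm
        have habs : |u₂ (y + cs) - u₁ y| = w y := by
          rw [hwdef]; exact abs_of_pos hwy
        rw [habs] at hlipst
        have hkeyy := hkey y hyI
        have hid := hΦid y hyI
        have hlb : f (φ₁ y) - f (φ₁ (X₁ (u₂ (y + cs)))) ≥ -(K * w y) := by
          rw [← hid]
          have := abs_le.mp hlipst
          linarith [this.1]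
        have hexp0 : (0:ℝ) < Real.exp (K * y) := Real.exp_pos _
        have hsum : 0 ≤ K * w y + (-(f (φ₂ (y + cs))) - -(f (φ₁ y))) := by
          have h1 : f (φ₂ (y + cs)) ≤ f (φ₁ (X₁ (u₂ (y + cs)))) := hkeyy
          linarith [hlb]
        calc (0:ℝ) = Real.exp (K * y) * 0 := by ring
          _ ≤ Real.exp (K * y) * (K * w y + (-(f (φ₂ (y + cs))) - -(f (φ₁ y)))) :=
            mul_le_mul_of_nonneg_left hsum hexp0.le
          _ = Real.exp (K * y) * K * w y +
              Real.exp (K * y) * (-(f (φ₂ (y + cs))) - -(f (φ₁ y))) := by ring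
    have hWle := hWmono ⟨le_rfl, hx₂gt.le⟩ ⟨hx₂gt.le, le_rfl⟩ hx₂gt.le
    have h1 : 0 < W (-ℓ₁) := mul_pos (Real.exp_pos _) hwpos
    have h2 : W x₂ ≤ 0 := by
      have := Real.exp_pos (K * x₂)
      simp only [hWdef]
      nlinarith
    linarith
  -- conclusion
  have harg : -ℓ₁ + cs ∈ Icc (-ℓ₂) ℓ₂ := hshift _ hl1m
  have hlt2 : -ℓ₂ < -ℓ₁ + cs := by simp only [hcsdef]; linarith
  have := hm2 ⟨le_rfl, by linarith⟩ harg hlt2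
  rw [hb₂.1] at this
  have : u₂ (-ℓ₁ + cs) ≤ -σ := by
    have := hwneg
    simp only [hwdef, hb₁.1] at this
    linarith
  linarith
end
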